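/- arXiv:1203.4139 — 3 statements merged into one kernel-verified Lean document; each statement's English description precedes it below -/
import Mathlib

section
/- Under the same hypotheses (μ weakly unimodal, r > 1, (q_n) the Gersho quantizer sequence, I ⊆ interior of supp μ compact, J_{n,I} ≠ ∅ for n ≥ m), define ε₂(n) = max{ | ∫_{q_n⁻¹(a)} |x − a|^r dμ(x) − diam(q_n⁻¹(a))^{1+r} · h(a) · Q(r) | : a ∈ J_{n,I} }, where Q(r) = 2^{−r}(1 + r)^{−1}. Then (n₁^I(n))^{1+r} · ε₂(n) → 0 as n → ∞. -/
open MeasureTheory Set Filter Topology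
open scoped ENNReal NNReal

/-- The distortion (quantization error) of order `r` of a quantizer `q` for `μ`,
as an extended nonnegative real: `∫ |x - q x|^r dμ`. -/
noncomputable def distortionE (μ : Measure ℝ) (q : ℝ → ℝ) (r : ℝ) : ℝ≥0∞ :=
  ∫⁻ x, ENNReal.ofReal (|x - q x| ^ r) ∂μ

/-- The `r`-th moment of `μ` on the set `s` about the point `a`:
`∫_s |x - a|^r dμ`. -/
noncomputable def cellMoment (μ : Measure ℝ) (r : ℝ) (s : Set ℝ) (a : ℝ) : ℝ≥0∞ :=
  ∫⁻ x in s, ENNReal.ofReal (|x - a| ^ r) ∂μ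

/-- A (scalar) quantizer: a Borel measurable map `ℝ → ℝ` with countable image. -/
def IsQuantizer (q : ℝ → ℝ) : Prop :=
  Measurable q ∧ (Set.range q).Countable

/-- An `n`-level Gersho quantizer of order `r` for `μ`:
(G1) exactly `n` codepoints; (G2) every codecell is an interval;
(G3) every codepoint is optimal for its own codecell;
(G4) every codecell contributes `D(μ,q,r)/n` to the distortion. -/
def IsGersho (μ : Measure ℝ) (r : ℝ) (n : ℕ) (q : ℝ → ℝ) : Prop :=
  IsQuantizer q ∧
  (Set.range q).encard = n ∧
  (∀ a ∈ Set.range q, (q ⁻¹' {a}).OrdConnected) ∧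
  (∀ a ∈ Set.range q, ∀ b : ℝ, cellMoment μ r (q ⁻¹' {a}) a ≤ cellMoment μ r (q ⁻¹' {a}) b) ∧
  (∀ a ∈ Set.range q, cellMoment μ r (q ⁻¹' {a}) a = distortionE μ q r / (n : ℝ≥0∞))

/-- The (topological) support of a Borel measure on `ℝ`. -/
def msupp (μ : Measure ℝ) : Set ℝ := {x | ∀ U ∈ nhds x, 0 < μ U}

/-- A probability density `h` is weakly unimodal if it is continuous on its support and
there is `l₀ > 0` such that `{x | h x ≥ l}` is a compact interval for every `l ∈ (0, l₀)`. -/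
def WeaklyUnimodal (h : ℝ → ℝ) : Prop :=
  ContinuousOn h (tsupport h) ∧
  ∃ l₀ : ℝ, 0 < l₀ ∧ ∀ l : ℝ, 0 < l → l < l₀ →
    IsCompact {x | l ≤ h x} ∧ ({x | l ≤ h x}).OrdConnected

/-- The constant `Q(r) = 2^{-r} (1+r)^{-1}`. -/
noncomputable def Qconst (r : ℝ) : ℝ := (2 : ℝ) ^ (-r) * (1 + r)⁻¹

/-- The optimal `n`-th Gersho quantization error for `μ` of order `r`. -/
noncomputable def gershoError (μ : Measure ℝ) (r : ℝ) (n : ℕ) : ℝ :=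
  (⨅ q ∈ {q : ℝ → ℝ | IsGersho μ r n q}, distortionE μ q r).toReal

/-- The optimal `n`-th quantization error for `μ` of order `r`. -/
noncomputable def optError (μ : Measure ℝ) (r : ℝ) (n : ℕ) : ℝ :=
  (⨅ q ∈ {q : ℝ → ℝ | IsQuantizer q ∧ (Set.range q).encard ≤ (n : ℕ∞)},
    distortionE μ q r).toReal

/-- The set `J = (a - b, ∞) ∩ (inf supp μ, sup supp μ)` (endpoints in the extended reals). -/
def Jset (μ : Measure ℝ) (a : EReal) (b : ℝ) : Set ℝ :=
  {z : ℝ | a - (b : EReal) < (z : EReal) ∧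
    sInf ((fun t : ℝ => (t : EReal)) '' msupp μ) < (z : EReal) ∧
    (z : EReal) < sSup ((fun t : ℝ => (t : EReal)) '' msupp μ)}

/-- `J_{n,I}`: the codepoints of `q n` whose codecell lies inside `I`. -/
def Jcells (q : ℕ → ℝ → ℝ) (I : Set ℝ) (n : ℕ) : Set ℝ :=
  {a ∈ Set.range (q n) | (q n) ⁻¹' {a} ⊆ I}

lemma GL_cont {b r : ℝ} (hr : 0 < r) : Continuous (fun x : ℝ => |x - b| ^ r) :=
  (continuous_id.sub continuous_const).abs.rpow_const (fun _ => Or.inr hr.le)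

lemma GL_int_eval {r : ℝ} (hr : 0 < r) {α β b : ℝ} (h1 : α ≤ b) (h2 : b ≤ β) :
    ∫ x in α..β, |x - b| ^ r = ((b - α) ^ (r + 1) + (β - b) ^ (r + 1)) / (r + 1) := by
  have hc : ∀ a c : ℝ, IntervalIntegrable (fun x : ℝ => |x - b| ^ r) volume a c :=
    fun a c => (GL_cont hr).intervalIntegrable a c
  have hsplit := intervalIntegral.integral_add_adjacent_intervals (hc α b) (hc b β)
  have e1 : ∫ x in α..b, |x - b| ^ r = (b - α) ^ (r + 1) / (r + 1) := by
    have e : ∫ x in α..b, |x - b| ^ r = ∫ x in α..b, (b - x) ^ r := by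
      apply intervalIntegral.integral_congr
      intro x hx
      rw [uIcc_of_le h1] at hx
      show |x - b| ^ r = (b - x) ^ r
      rw [abs_of_nonpos (by linarith [hx.2]), neg_sub]
    rw [e]
    have e2 := intervalIntegral.integral_comp_sub_left (fun y : ℝ => y ^ r) b (a := α) (b := b)
    rw [e2, sub_self, integral_rpow (Or.inl (by linarith)),
      Real.zero_rpow (by positivity)]
    ring
  have e2 : ∫ x in b..β, |x - b| ^ r = (β - b) ^ (r + 1) / (r + 1) := by
    have e : ∫ x in b..β, |x - b| ^ r = ∫ x in b..β, (x - b) ^ r := by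
      apply intervalIntegral.integral_congr
      intro x hx
      rw [uIcc_of_le h2] at hx
      show |x - b| ^ r = (x - b) ^ r
      rw [abs_of_nonneg (by linarith [hx.1])]
    rw [e]
    have e3 := intervalIntegral.integral_comp_sub_right (fun y : ℝ => y ^ r) b (a := b) (b := β)
    rw [e3, sub_self, integral_rpow (Or.inl (by linarith)),
      Real.zero_rpow (by positivity)]
    ring
  rw [← hsplit, e1, e2]
  ring

lemma GL_lint_eval {r : ℝ} (hr : 0 < r) {α β b : ℝ} (h1 : α ≤ b) (h2 : b ≤ β) :
    ∫⁻ x in Icc α β, ENNReal.ofReal (|x - b| ^ r) =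
      ENNReal.ofReal (((b - α) ^ (r + 1) + (β - b) ^ (r + 1)) / (r + 1)) := by
  rw [← GL_int_eval hr h1 h2]
  rw [← MeasureTheory.ofReal_integral_eq_lintegral_ofReal
    ((GL_cont (b := b) hr).integrableOn_Icc) (ae_of_all _ (fun x => by positivity))]
  congr 1
  rw [intervalIntegral.integral_of_le (h1.trans h2), integral_Icc_eq_integral_Ioc]

lemma GL_min_ineq {r : ℝ} (hr : 0 < r) {α β b : ℝ} (h1 : α ≤ b) (h2 : b ≤ β) :
    Qconst r * (β - α) ^ (r + 1) ≤ ((b - α) ^ (r + 1) + (β - b) ^ (r + 1)) / (r + 1) := by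
  have hs : (0:ℝ) ≤ b - α := by linarith
  have ht : (0:ℝ) ≤ β - b := by linarith
  have hp : (0:ℝ) < r + 1 := by linarith
  have hkey : (((b - α) + (β - b)) / 2) ^ (r+1) ≤ ((b - α) ^ (r+1) + (β - b) ^ (r+1)) / 2 := by
    have h2' := NNReal.rpow_arith_mean_le_arith_mean2_rpow (1/2) (1/2)
      (b - α).toNNReal (β - b).toNNReal (add_halves 1) (by linarith : 1 ≤ r + 1)
    have hco := NNReal.coe_le_coe.mpr h2'
    push_cast [NNReal.coe_rpow, Real.coe_toNNReal _ hs, Real.coe_toNNReal _ ht] at hco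
    calc (((b - α) + (β - b)) / 2) ^ (r+1)
        = (1/2 * (b - α) + 1/2 * (β - b)) ^ (r+1) := by ring_nf
      _ ≤ 1/2 * (b - α) ^ (r+1) + 1/2 * (β - b) ^ (r+1) := by
          convert hco using 3 <;> ring
      _ = ((b - α) ^ (r+1) + (β - b) ^ (r+1)) / 2 := by ring
  have h2r : (0:ℝ) < 2 ^ r := Real.rpow_pos_of_pos (by norm_num) r
  have hd : (((b - α) + (β - b)) / 2) ^ (r+1) = ((b - α) + (β - b)) ^ (r+1) / 2 ^ (r+1) :=
    Real.div_rpow (by linarith) (by norm_num : (0:ℝ) ≤ 2) (r+1)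
  have h2p : (2:ℝ) ^ (r+1) = 2 ^ r * 2 := by
    rw [Real.rpow_add (by norm_num), Real.rpow_one]
  have hneg : (2:ℝ) ^ (-r) = (2 ^ r)⁻¹ := Real.rpow_neg (by norm_num) r
  have hβα : β - α = (b - α) + (β - b) := by ring
  rw [hβα, Qconst, hneg]
  rw [hd, h2p] at hkey
  rw [div_le_div_iff₀ (by positivity) (by norm_num)] at hkey
  have main : (2 ^ r)⁻¹ * ((b - α) + (β - b)) ^ (r+1) ≤ (b - α) ^ (r+1) + (β - b) ^ (r+1) := by
    rw [inv_mul_le_iff₀ h2r]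
    nlinarith [hkey]
  calc (2 ^ r)⁻¹ * (1 + r)⁻¹ * ((b - α) + (β - b)) ^ (r + 1)
      = ((2 ^ r)⁻¹ * ((b - α) + (β - b)) ^ (r + 1)) * (1 + r)⁻¹ := by ring
    _ ≤ ((b - α) ^ (r+1) + (β - b) ^ (r+1)) * (1 + r)⁻¹ := by
        exact mul_le_mul_of_nonneg_right main (by positivity)
    _ = ((b - α) ^ (r + 1) + (β - b) ^ (r + 1)) / (r + 1) := by
        rw [div_eq_mul_inv]; ring_nf

lemma GL_mid_val {r : ℝ} (hr : 0 < r) {L : ℝ} (hL : 0 ≤ L) :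
    ((L/2) ^ (r+1) + (L/2) ^ (r+1)) / (r+1) = Qconst r * L ^ (r+1) := by
  have h2r : (0:ℝ) < 2 ^ r := Real.rpow_pos_of_pos (by norm_num) r
  have hd : (L / 2) ^ (r+1) = L ^ (r+1) / 2 ^ (r+1) :=
    Real.div_rpow hL (by norm_num : (0:ℝ) ≤ 2) (r+1)
  have h2p : (2:ℝ) ^ (r+1) = 2 ^ r * 2 := by
    rw [Real.rpow_add (by norm_num), Real.rpow_one]
  have hneg : (2:ℝ) ^ (-r) = (2 ^ r)⁻¹ := Real.rpow_neg (by norm_num) r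
  rw [hd, h2p, Qconst, hneg]
  have hp : (0:ℝ) < r + 1 := by linarith
  field_simp
  ring

lemma GL_exists_pos {h : ℝ → ℝ} {μ : Measure ℝ}
    (hμ : μ = volume.withDensity (fun x => ENNReal.ofReal (h x)))
    {U : Set ℝ} (hU : IsOpen U) (hpos : 0 < μ U) : ∃ y ∈ U, 0 < h y := by
  by_contra hc
  push_neg at hc
  have h0 : μ U = 0 := by
    rw [hμ, withDensity_apply _ hU.measurableSet]
    rw [setLIntegral_congr_fun hU.measurableSet
      (fun y hy => show ENNReal.ofReal (h y) = 0 by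
        simp [ENNReal.ofReal_eq_zero.mpr (hc y hy)])]
    simp
  rw [h0] at hpos
  exact lt_irrefl _ hpos

lemma GL_msupp_sub {h : ℝ → ℝ} {μ : Measure ℝ}
    (hμ : μ = volume.withDensity (fun x => ENNReal.ofReal (h x))) :
    msupp μ ⊆ tsupport h := by
  intro x hx
  rw [tsupport, mem_closure_iff]
  intro U hU hxU
  have hpos : 0 < μ U := hx U (hU.mem_nhds hxU)
  obtain ⟨y, hyU, hy⟩ := GL_exists_pos hμ hU hpos
  exact ⟨y, hyU, ne_of_gt hy⟩

lemma GL_pos_interior {h : ℝ → ℝ} {μ : Measure ℝ}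
    (hμ : μ = volume.withDensity (fun x => ENNReal.ofReal (h x)))
    (hwu2 : ∃ l₀ : ℝ, 0 < l₀ ∧ ∀ l : ℝ, 0 < l → l < l₀ →
      IsCompact {x | l ≤ h x} ∧ ({x | l ≤ h x}).OrdConnected)
    {x : ℝ} (hx : x ∈ interior (msupp μ)) : 0 < h x := by
  obtain ⟨ε, hε, hball⟩ := Metric.mem_nhds_iff.mp (mem_interior_iff_mem_nhds.mp hx)
  rw [Real.ball_eq_Ioo] at hball
  have h1 : 0 < μ (Ioo (x - ε) x) := by
    refine (hball ?_ : x - ε/2 ∈ msupp μ) _ (isOpen_Ioo.mem_nhds ?_)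
    · exact ⟨by linarith, by linarith⟩
    · exact ⟨by linarith, by linarith⟩
  have h2 : 0 < μ (Ioo x (x + ε)) := by
    refine (hball ?_ : x + ε/2 ∈ msupp μ) _ (isOpen_Ioo.mem_nhds ?_)
    · exact ⟨by linarith, by linarith⟩
    · exact ⟨by linarith, by linarith⟩
  obtain ⟨w₁, hw₁U, hw₁⟩ := GL_exists_pos hμ isOpen_Ioo h1
  obtain ⟨w₂, hw₂U, hw₂⟩ := GL_exists_pos hμ isOpen_Ioo h2
  obtain ⟨l₀, hl₀, hlev⟩ := hwu2
  set l := min (min (h w₁) (h w₂)) (l₀/2) with hldef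
  have hlpos : 0 < l := lt_min (lt_min hw₁ hw₂) (by linarith)
  have hllt : l < l₀ := lt_of_le_of_lt (min_le_right _ _) (by linarith)
  have hOC := (hlev l hlpos hllt).2
  have hm1 : w₁ ∈ {y | l ≤ h y} := by
    show l ≤ h w₁
    exact (min_le_left _ _).trans (min_le_left _ _)
  have hm2 : w₂ ∈ {y | l ≤ h y} := by
    show l ≤ h w₂
    exact (min_le_left _ _).trans (min_le_right _ _)
  have hxm : x ∈ Icc w₁ w₂ := ⟨(hw₁U.2).le, (hw₂U.1).le⟩
  have := hOC.out hm1 hm2 hxm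
  exact lt_of_lt_of_le hlpos this

lemma GL_superadd {r : ℝ} (hr1 : 1 ≤ r) {s t : ℝ} (hs : 0 ≤ s) (ht : 0 ≤ t) :
    s ^ r + t ^ r ≤ (s + t) ^ r := by
  have h := NNReal.coe_le_coe.mpr (NNReal.add_rpow_le_rpow_add ⟨s, hs⟩ ⟨t, ht⟩ hr1)
  push_cast [NNReal.coe_rpow] at h
  convert h using 2 <;> rfl

lemma GL_cancel {r : ℝ} (hr0 : 0 < r) {w : ℝ → ℝ≥0∞} {α β : ℝ}
    (hw : AEMeasurable w (volume.restrict (Icc α β)))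
    {a b d : ℝ} (hd : 0 < d)
    (hpt : ∀ x ∈ Icc α β, |x - b| ^ r + d ^ r ≤ |x - a| ^ r)
    (hle : (∫⁻ x in Icc α β, w x * ENNReal.ofReal (|x - a| ^ r) ∂volume)
        ≤ ∫⁻ x in Icc α β, w x * ENNReal.ofReal (|x - b| ^ r) ∂volume)
    (hfin : (∫⁻ x in Icc α β, w x * ENNReal.ofReal (|x - a| ^ r) ∂volume) ≠ ⊤) :
    ∫⁻ x in Icc α β, w x ∂volume = 0 := by
  have hA : AEMeasurable (fun x => w x * ENNReal.ofReal (|x - b| ^ r))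
      (volume.restrict (Icc α β)) :=
    hw.mul ((ENNReal.continuous_ofReal.comp (GL_cont hr0)).measurable.aemeasurable)
  have hsum : (∫⁻ x in Icc α β, w x * ENNReal.ofReal (|x - b| ^ r) ∂volume)
      + (∫⁻ x in Icc α β, w x * ENNReal.ofReal (d ^ r) ∂volume)
      ≤ ∫⁻ x in Icc α β, w x * ENNReal.ofReal (|x - a| ^ r) ∂volume := by
    rw [← lintegral_add_left' hA]
    apply setLIntegral_mono' measurableSet_Icc
    intro x hx
    rw [← mul_add, ← ENNReal.ofReal_add (by positivity) (by positivity)]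
    exact mul_le_mul_right (ENNReal.ofReal_le_ofReal (hpt x hx)) _
  have hBle : (∫⁻ x in Icc α β, w x * ENNReal.ofReal (|x - b| ^ r) ∂volume)
      + (∫⁻ x in Icc α β, w x * ENNReal.ofReal (d ^ r) ∂volume)
      ≤ (∫⁻ x in Icc α β, w x * ENNReal.ofReal (|x - b| ^ r) ∂volume) + 0 := by
    rw [add_zero]
    exact hsum.trans hle
  have hBfin : (∫⁻ x in Icc α β, w x * ENNReal.ofReal (|x - b| ^ r) ∂volume) ≠ ⊤ :=
    ne_top_of_le_ne_top hfin ((le_add_right le_rfl).trans hsum)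
  have hB0 : (∫⁻ x in Icc α β, w x * ENNReal.ofReal (d ^ r) ∂volume) = 0 :=
    le_antisymm (ENNReal.le_of_add_le_add_left hBfin hBle) zero_le
  rw [lintegral_mul_const' _ _ ENNReal.ofReal_ne_top] at hB0
  rcases mul_eq_zero.mp hB0 with h0 | h0
  · exact h0
  · exact absurd h0 (by
      simp only [ENNReal.ofReal_eq_zero, not_le]
      exact Real.rpow_pos_of_pos hd r)

lemma GL_cell {μ : Measure ℝ} {h : ℝ → ℝ}
    (hμ : μ = volume.withDensity (fun x => ENNReal.ofReal (h x)))
    {r : ℝ} (hr0 : 0 < r) (hr1 : 1 ≤ r) {u v : ℝ}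
    (hcont : ContinuousOn h (Set.Icc u v))
    {C : Set ℝ} {a : ℝ} (hCne : C.Nonempty) (hsub : C ⊆ Set.Icc u v)
    (hOC : C.OrdConnected)
    (hopt : ∀ b : ℝ, cellMoment μ r C a ≤ cellMoment μ r C b)
    (hpos : cellMoment μ r C a ≠ 0) (hfin : cellMoment μ r C a ≠ ⊤) :
    a ∈ Set.Icc u v ∧ volume C = ENNReal.ofReal (Metric.diam C) ∧
    (∀ c : ℝ, (∀ x ∈ Set.Icc u v, |x - a| ≤ Metric.diam C → c ≤ h x) →
      ENNReal.ofReal c * ENNReal.ofReal (Qconst r * Metric.diam C ^ (r+1))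
        ≤ cellMoment μ r C a) ∧
    (∀ c : ℝ, (∀ x ∈ Set.Icc u v, |x - a| ≤ Metric.diam C → h x ≤ c) →
      cellMoment μ r C a ≤
        ENNReal.ofReal c * ENNReal.ofReal (Qconst r * Metric.diam C ^ (r+1))) := by
  have hC : MeasurableSet C := hOC.measurableSet
  have hbdd : Bornology.IsBounded C := (Metric.isBounded_Icc u v).subset hsub
  set α := sInf C with hα
  set β := sSup C with hβ
  have hbb : BddBelow C := hbdd.bddBelow
  have hba : BddAbove C := hbdd.bddAbove
  have hαβ : α ≤ β := Real.sInf_le_sSup _ hbb hba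
  have hCIcc : C ⊆ Icc α β := fun x hx => ⟨csInf_le hbb hx, le_csSup hba hx⟩
  have hIooC : Ioo α β ⊆ C := fun x hx => by
    obtain ⟨c1, hc1, hlt1⟩ := exists_lt_of_csInf_lt hCne hx.1
    obtain ⟨c2, hc2, hlt2⟩ := exists_lt_of_lt_csSup hCne hx.2
    exact hOC.out hc1 hc2 ⟨hlt1.le, hlt2.le⟩
  have huα : u ≤ α := le_csInf hCne fun x hx => (hsub hx).1
  have hβv : β ≤ v := csSup_le hCne fun x hx => (hsub hx).2
  have hIccI : Icc α β ⊆ Icc u v := Icc_subset_Icc huα hβv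
  have hdiam : Metric.diam C = β - α := Real.diam_eq hbdd
  have hvol : volume C = ENNReal.ofReal (Metric.diam C) := by
    rw [hdiam]
    apply le_antisymm
    · calc volume C ≤ volume (Icc α β) := measure_mono hCIcc
        _ = ENNReal.ofReal (β - α) := Real.volume_Icc
    · calc ENNReal.ofReal (β - α) = volume (Ioo α β) := Real.volume_Ioo.symm
        _ ≤ volume C := measure_mono hIooC
  have hIccIoo : ∀ F : ℝ → ℝ≥0∞, (∫⁻ x in C, F x ∂volume) = ∫⁻ x in Icc α β, F x ∂volume := by
    intro F
    apply le_antisymm (lintegral_mono_set hCIcc)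
    rw [← setLIntegral_congr (Ioo_ae_eq_Icc (μ := volume) (a := α) (b := β))]
    exact lintegral_mono_set hIooC
  have hwmeas : AEMeasurable (fun x => ENNReal.ofReal (h x)) (volume.restrict C) :=
    (((hcont.mono hsub).aemeasurable hC).ennreal_ofReal)
  have hmeq : ∀ b : ℝ, cellMoment μ r C b
      = ∫⁻ x in Icc α β, ENNReal.ofReal (h x) * ENNReal.ofReal (|x - b| ^ r) ∂volume := by
    intro b
    have hg : AEMeasurable (fun x : ℝ => ENNReal.ofReal (|x - b| ^ r))
        ((volume.restrict C).withDensity fun x => ENNReal.ofReal (h x)) :=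
      (ENNReal.continuous_ofReal.comp (GL_cont hr0)).measurable.aemeasurable
    rw [cellMoment, hμ, MeasureTheory.restrict_withDensity hC,
      lintegral_withDensity_eq_lintegral_mul₀' hwmeas hg]
    simp only [Pi.mul_apply]
    exact hIccIoo _
  have hwIcc : AEMeasurable (fun x => ENNReal.ofReal (h x)) (volume.restrict (Icc α β)) :=
    ((hcont.mono hIccI).aemeasurable measurableSet_Icc).ennreal_ofReal
  -- a ∈ [α, β]
  have haIcc : a ∈ Icc α β := by
    by_contra hna
    have hw0 : (∫⁻ x in Icc α β, ENNReal.ofReal (h x) ∂volume) = 0 := by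
      rcases lt_or_ge a α with hlt | hge
      · refine GL_cancel hr0 hwIcc (sub_pos.mpr hlt) (a := a) (b := α) (fun x hx => ?_)
          (by rw [← hmeq, ← hmeq]; exact hopt α) (by rw [← hmeq]; exact hfin)
        have h1 : |x - α| = x - α := abs_of_nonneg (by linarith [hx.1])
        have h2 : |x - a| = x - a := abs_of_nonneg (by linarith [hx.1])
        rw [h1, h2]
        calc (x - α) ^ r + (α - a) ^ r ≤ ((x - α) + (α - a)) ^ r :=
              GL_superadd hr1 (by linarith [hx.1]) (by linarith)
          _ = (x - a) ^ r := by ring_nf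
      · have hlt : β < a := by
          rcases lt_or_ge β a with h' | h'
          · exact h'
          · exact absurd ⟨hge, h'⟩ hna
        refine GL_cancel hr0 hwIcc (sub_pos.mpr hlt) (a := a) (b := β) (fun x hx => ?_)
          (by rw [← hmeq, ← hmeq]; exact hopt β) (by rw [← hmeq]; exact hfin)
        have h1 : |x - β| = β - x := by
          rw [abs_of_nonpos (by linarith [hx.2])]; ring
        have h2 : |x - a| = a - x := by
          rw [abs_of_nonpos (by linarith [hx.2])]; ring
        rw [h1, h2]
        calc (β - x) ^ r + (a - β) ^ r ≤ ((β - x) + (a - β)) ^ r :=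
              GL_superadd hr1 (by linarith [hx.2]) (by linarith)
          _ = (a - x) ^ r := by ring_nf
    -- then the moment itself vanishes, contradiction
    have hK : ∀ x ∈ Icc α β, |x - a| ^ r ≤ (|α| + |β| + |a|) ^ r := by
      intro x hx
      apply Real.rpow_le_rpow (abs_nonneg _) ?_ hr0.le
      have h1 : |x| ≤ |α| + |β| := by
        cases abs_cases x with
        | inl hc => rw [hc.1]; cases abs_cases β with
          | inl hc2 => linarith [hx.2, abs_nonneg α]
          | inr hc2 => linarith [hx.2, abs_nonneg α, abs_nonneg β]
        | inr hc => rw [hc.1]; cases abs_cases α with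
          | inl hc2 => linarith [hx.1, abs_nonneg β]
          | inr hc2 => linarith [hx.1, abs_nonneg β]
      calc |x - a| ≤ |x| + |a| := abs_sub _ _
        _ ≤ |α| + |β| + |a| := by linarith
    have : cellMoment μ r C a = 0 := by
      rw [hmeq a]
      have hle2 : (∫⁻ x in Icc α β, ENNReal.ofReal (h x) * ENNReal.ofReal (|x - a| ^ r) ∂volume)
          ≤ ∫⁻ x in Icc α β, ENNReal.ofReal (h x) * ENNReal.ofReal ((|α| + |β| + |a|) ^ r) ∂volume := by
        apply setLIntegral_mono' measurableSet_Icc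
        intro x hx
        exact mul_le_mul_right (ENNReal.ofReal_le_ofReal (hK x hx)) _
      rw [lintegral_mul_const' _ _ ENNReal.ofReal_ne_top, hw0, zero_mul] at hle2
      exact le_antisymm hle2 zero_le
    exact hpos this
  refine ⟨hIccI haIcc, hvol, ?_, ?_⟩
  · -- lower bound
    intro c hc
    have habs : ∀ x ∈ Icc α β, |x - a| ≤ Metric.diam C := by
      intro x hx
      rw [hdiam]
      exact abs_le.mpr ⟨by linarith [hx.1, haIcc.2], by linarith [hx.2, haIcc.1]⟩
    have h1 : ENNReal.ofReal (Qconst r * Metric.diam C ^ (r+1))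
        ≤ ∫⁻ x in Icc α β, ENNReal.ofReal (|x - a| ^ r) ∂volume := by
      rw [GL_lint_eval hr0 haIcc.1 haIcc.2, hdiam]
      exact ENNReal.ofReal_le_ofReal (GL_min_ineq hr0 haIcc.1 haIcc.2)
    calc ENNReal.ofReal c * ENNReal.ofReal (Qconst r * Metric.diam C ^ (r+1))
        ≤ ENNReal.ofReal c * ∫⁻ x in Icc α β, ENNReal.ofReal (|x - a| ^ r) ∂volume :=
          mul_le_mul_right h1 _
      _ = ∫⁻ x in Icc α β, ENNReal.ofReal c * ENNReal.ofReal (|x - a| ^ r) ∂volume :=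
          (lintegral_const_mul' _ _ ENNReal.ofReal_ne_top).symm
      _ ≤ ∫⁻ x in Icc α β, ENNReal.ofReal (h x) * ENNReal.ofReal (|x - a| ^ r) ∂volume := by
          apply setLIntegral_mono' measurableSet_Icc
          intro x hx
          exact mul_le_mul_left
            (ENNReal.ofReal_le_ofReal (hc x (hIccI hx) (habs x hx))) _
      _ = cellMoment μ r C a := (hmeq a).symm
  · -- upper bound
    intro c hc
    have habs : ∀ x ∈ Icc α β, |x - a| ≤ Metric.diam C := by
      intro x hx
      rw [hdiam]
      exact abs_le.mpr ⟨by linarith [hx.1, haIcc.2], by linarith [hx.2, haIcc.1]⟩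
    have hmid : (α + β) / 2 ∈ Icc α β := ⟨by linarith, by linarith⟩
    have h2 : (∫⁻ x in Icc α β, ENNReal.ofReal (|x - (α + β) / 2| ^ r) ∂volume)
        = ENNReal.ofReal (Qconst r * Metric.diam C ^ (r+1)) := by
      rw [GL_lint_eval hr0 hmid.1 hmid.2, hdiam]
      congr 1
      have e1 : (α + β) / 2 - α = (β - α) / 2 := by ring
      have e2 : β - (α + β) / 2 = (β - α) / 2 := by ring
      rw [e1, e2, GL_mid_val hr0 (by linarith : (0:ℝ) ≤ β - α)]
    calc cellMoment μ r C a ≤ cellMoment μ r C ((α + β) / 2) := hopt _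
      _ = ∫⁻ x in Icc α β, ENNReal.ofReal (h x) * ENNReal.ofReal (|x - (α + β) / 2| ^ r) ∂volume :=
          hmeq _
      _ ≤ ∫⁻ x in Icc α β, ENNReal.ofReal c * ENNReal.ofReal (|x - (α + β) / 2| ^ r) ∂volume := by
          apply setLIntegral_mono' measurableSet_Icc
          intro x hx
          exact mul_le_mul_left
            (ENNReal.ofReal_le_ofReal (hc x (hIccI hx) (habs x hx))) _
      _ = ENNReal.ofReal c * ∫⁻ x in Icc α β, ENNReal.ofReal (|x - (α + β) / 2| ^ r) ∂volume :=
          lintegral_const_mul' _ _ ENNReal.ofReal_ne_top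
      _ = ENNReal.ofReal c * ENNReal.ofReal (Qconst r * Metric.diam C ^ (r+1)) := by rw [h2]

lemma GL_meas_g {b r : ℝ} (hr : 0 < r) :
    Measurable (fun x : ℝ => ENNReal.ofReal (|x - b| ^ r)) :=
  (ENNReal.continuous_ofReal.comp (GL_cont hr)).measurable

lemma GL_partition {μ : Measure ℝ} {qn : ℝ → ℝ} (hqm : Measurable qn)
    (hfin : (Set.range qn).Finite) (f : ℝ → ℝ≥0∞) :
    ∫⁻ x, f x ∂μ = ∑ a ∈ hfin.toFinset, ∫⁻ x in qn ⁻¹' {a}, f x ∂μ := by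
  have hu : (⋃ a ∈ hfin.toFinset, qn ⁻¹' {a}) = univ := by
    ext x
    simp only [mem_iUnion, mem_preimage, mem_singleton_iff, mem_univ, iff_true]
    exact ⟨qn x, hfin.mem_toFinset.mpr ⟨x, rfl⟩, rfl⟩
  have hd : (hfin.toFinset : Set ℝ).PairwiseDisjoint (fun a => qn ⁻¹' {a}) := by
    intro a _ b _ hab
    rw [Function.onFun, Set.disjoint_left]
    intro x hxa hxb
    exact hab (by rw [← hxa, ← hxb] : (a : ℝ) = b)
  have hm : ∀ a ∈ hfin.toFinset, MeasurableSet (qn ⁻¹' {a}) :=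
    fun a _ => hqm (measurableSet_singleton a)
  rw [← lintegral_biUnion_finset hd hm f, hu, Measure.restrict_univ]

lemma GL_distortion_le {μ : Measure ℝ} {r : ℝ} (hr0 : 0 < r) {qn : ℝ → ℝ}
    (hqm : Measurable qn) (hfin : (Set.range qn).Finite)
    (hopt : ∀ a ∈ Set.range qn, ∀ b : ℝ,
      cellMoment μ r (qn ⁻¹' {a}) a ≤ cellMoment μ r (qn ⁻¹' {a}) b)
    (b : ℝ) :
    distortionE μ qn r ≤ ∫⁻ x, ENNReal.ofReal (|x - b| ^ r) ∂μ := by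
  have hmeasf : Measurable (fun x => ENNReal.ofReal (|x - qn x| ^ r)) :=
    ENNReal.continuous_ofReal.measurable.comp
      ((Real.continuous_rpow_const hr0.le).measurable.comp (measurable_id.sub hqm).abs)
  calc distortionE μ qn r
      = ∑ a ∈ hfin.toFinset, ∫⁻ x in qn ⁻¹' {a}, ENNReal.ofReal (|x - qn x| ^ r) ∂μ :=
        GL_partition hqm hfin _
    _ = ∑ a ∈ hfin.toFinset, cellMoment μ r (qn ⁻¹' {a}) a := by
        apply Finset.sum_congr rfl
        intro a _
        apply setLIntegral_congr_fun (hqm (measurableSet_singleton a))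
        exact (fun x hx => by rw [show qn x = a from hx])
    _ ≤ ∑ a ∈ hfin.toFinset, cellMoment μ r (qn ⁻¹' {a}) b :=
        Finset.sum_le_sum (fun a ha => hopt a (hfin.mem_toFinset.mp ha) b)
    _ = ∫⁻ x, ENNReal.ofReal (|x - b| ^ r) ∂μ := (GL_partition hqm hfin _).symm

lemma GL_D_pos {μ : Measure ℝ} [IsProbabilityMeasure μ] {h : ℝ → ℝ}
    (hμ : μ = volume.withDensity (fun x => ENNReal.ofReal (h x)))
    {r : ℝ} (hr0 : 0 < r) {qn : ℝ → ℝ} (hqm : Measurable qn)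
    (hfin : (Set.range qn).Finite) :
    distortionE μ qn r ≠ 0 := by
  intro h0
  have hmeasf : Measurable (fun x => ENNReal.ofReal (|x - qn x| ^ r)) :=
    ENNReal.continuous_ofReal.measurable.comp
      ((Real.continuous_rpow_const hr0.le).measurable.comp (measurable_id.sub hqm).abs)
  rw [distortionE, lintegral_eq_zero_iff hmeasf] at h0
  have hae : ∀ᵐ x ∂μ, x ∈ Set.range qn := by
    filter_upwards [h0] with x hx
    simp only [Pi.zero_apply, ENNReal.ofReal_eq_zero] at hx
    have h1 : |x - qn x| ^ r = 0 := le_antisymm hx (by positivity)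
    have h2 : |x - qn x| = 0 := by
      by_contra hne
      have : 0 < |x - qn x| := lt_of_le_of_ne (abs_nonneg _) (Ne.symm hne)
      exact absurd h1 (ne_of_gt (Real.rpow_pos_of_pos this r))
    have h3 : x = qn x := by
      have := abs_eq_zero.mp h2
      linarith [sub_eq_zero.mp this]
    exact ⟨x, h3.symm⟩
  have h1 : μ (Set.range qn) = 1 := by
    have hcompl : μ (Set.range qn)ᶜ = 0 := ae_iff.mp hae
    have := measure_add_measure_compl (μ := μ) hfin.measurableSet
    rw [hcompl, add_zero] at this
    rw [this, measure_univ]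
  have h2 : μ (Set.range qn) = 0 := by
    rw [hμ]
    exact (withDensity_absolutelyContinuous volume _) (hfin.countable.measure_zero _)
  rw [h1] at h2
  exact one_ne_zero h2

lemma GL_ME_fin {μ : Measure ℝ} [IsProbabilityMeasure μ] {r : ℝ} (hr0 : 0 < r)
    (hmom : Integrable (fun x => |x| ^ r) μ) (b : ℝ) :
    (∫⁻ x, ENNReal.ofReal (|x - b| ^ r) ∂μ) ≠ ⊤ := by
  have hpt : ∀ x : ℝ, |x - b| ^ r ≤ 2 ^ r * (|x| ^ r + |b| ^ r) := by
    intro x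
    have h1 : |x - b| ≤ |x| + |b| := abs_sub _ _
    have h2 : |x| + |b| ≤ 2 * max |x| |b| := by
      rcases le_total |x| |b| with hc | hc
      · rw [max_eq_right hc]; linarith
      · rw [max_eq_left hc]; linarith
    calc |x - b| ^ r ≤ (2 * max |x| |b|) ^ r :=
          Real.rpow_le_rpow (abs_nonneg _) (h1.trans h2) hr0.le
      _ = 2 ^ r * (max |x| |b|) ^ r :=
          Real.mul_rpow (by norm_num) (le_max_of_le_left (abs_nonneg _))
      _ ≤ 2 ^ r * (|x| ^ r + |b| ^ r) := by
          apply mul_le_mul_of_nonneg_left _ (Real.rpow_nonneg (by norm_num) r)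
          rcases le_total |x| |b| with hc | hc
          · rw [max_eq_right hc]
            have := Real.rpow_nonneg (abs_nonneg x) r
            linarith
          · rw [max_eq_left hc]
            have := Real.rpow_nonneg (abs_nonneg b) r
            linarith
  have hmeasA : Measurable (fun x : ℝ => ENNReal.ofReal (|x| ^ r)) := by
    have : (fun x : ℝ => ENNReal.ofReal (|x| ^ r)) = fun x : ℝ => ENNReal.ofReal (|x - 0| ^ r) := by
      simp
    rw [this]
    exact GL_meas_g hr0
  have hfinA : (∫⁻ x, ENNReal.ofReal (|x| ^ r) ∂μ) ≠ ⊤ := by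
    have he : (∫⁻ x, ENNReal.ofReal (|x| ^ r) ∂μ) = ∫⁻ x, ‖|x| ^ r‖ₑ ∂μ := by
      apply lintegral_congr
      intro x
      rw [← Real.enorm_eq_ofReal (by positivity)]
    rw [he]
    exact ne_of_lt hmom.2
  apply ne_top_of_le_ne_top (b := ENNReal.ofReal (2 ^ r) *
      ((∫⁻ x, ENNReal.ofReal (|x| ^ r) ∂μ) + ENNReal.ofReal (|b| ^ r) * μ univ))
  · apply ENNReal.mul_ne_top ENNReal.ofReal_ne_top
    apply ENNReal.add_ne_top.mpr
    exact ⟨hfinA, ENNReal.mul_ne_top ENNReal.ofReal_ne_top (by simp [measure_univ])⟩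
  calc (∫⁻ x, ENNReal.ofReal (|x - b| ^ r) ∂μ)
      ≤ ∫⁻ x, ENNReal.ofReal (2 ^ r * (|x| ^ r + |b| ^ r)) ∂μ :=
        lintegral_mono fun x => ENNReal.ofReal_le_ofReal (hpt x)
    _ = ∫⁻ x, ENNReal.ofReal (2 ^ r) * (ENNReal.ofReal (|x| ^ r) + ENNReal.ofReal (|b| ^ r)) ∂μ := by
        apply lintegral_congr
        intro x
        rw [ENNReal.ofReal_mul (Real.rpow_nonneg (by norm_num) r),
          ENNReal.ofReal_add (by positivity) (by positivity)]
    _ = ENNReal.ofReal (2 ^ r) * ∫⁻ x, (ENNReal.ofReal (|x| ^ r) + ENNReal.ofReal (|b| ^ r)) ∂μ :=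
        lintegral_const_mul' _ _ ENNReal.ofReal_ne_top
    _ = ENNReal.ofReal (2 ^ r) *
        ((∫⁻ x, ENNReal.ofReal (|x| ^ r) ∂μ) + ENNReal.ofReal (|b| ^ r) * μ univ) := by
        rw [lintegral_add_left hmeasA, lintegral_const]

theorem gersho_stmt_14 (μ : Measure ℝ) [IsProbabilityMeasure μ]
    (r : ℝ) (hr : 1 < r) (hmom : Integrable (fun x => |x| ^ r) μ)
    (h : ℝ → ℝ) (hh0 : ∀ x, 0 ≤ h x)
    (hμ : μ = volume.withDensity (fun x => ENNReal.ofReal (h x)))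
    (hwu : WeaklyUnimodal h)
    (q : ℕ → ℝ → ℝ) (hq : ∀ n : ℕ, 0 < n → IsGersho μ r n (q n))
    (u v : ℝ) (huv : u < v) (hI : Set.Icc u v ⊆ interior (msupp μ))
    (m : ℕ) (hm : ∀ n ≥ m, (Jcells q (Set.Icc u v) n).Nonempty) :
    Tendsto
      (fun n : ℕ => ((Jcells q (Set.Icc u v) n).ncard : ℝ) ^ (1 + r) *
        sSup ((fun a : ℝ =>
          |(cellMoment μ r ((q n) ⁻¹' {a}) a).toReal -
            Metric.diam ((q n) ⁻¹' {a}) ^ (1 + r) * h a * Qconst r|) ''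
          Jcells q (Set.Icc u v) n))
      atTop (nhds 0) := by
  classical
  have hr0 : 0 < r := by linarith
  have hr1 : (1:ℝ) ≤ r := hr.le
  have hp0 : (0:ℝ) < r + 1 := by linarith
  have hIts : Set.Icc u v ⊆ tsupport h :=
    fun x hx => GL_msupp_sub hμ (interior_subset (hI hx))
  have hcont : ContinuousOn h (Set.Icc u v) := fun x hx => (hwu.1 x (hIts hx)).mono hIts
  have hposI : ∀ x ∈ Set.Icc u v, 0 < h x := fun x hx => GL_pos_interior hμ hwu.2 (hI hx)
  obtain ⟨xm, hxmI, hxmin⟩ := isCompact_Icc.exists_isMinOn (nonempty_Icc.mpr huv.le) hcont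
  obtain ⟨xM, hxMI, hxmax⟩ := isCompact_Icc.exists_isMaxOn (nonempty_Icc.mpr huv.le) hcont
  set c₁ := h xm with hc₁def
  set c₂ := h xM with hc₂def
  have hc₁pos : 0 < c₁ := hposI xm hxmI
  have hc₁ : ∀ x ∈ Set.Icc u v, c₁ ≤ h x := hxmin
  have hc₂ : ∀ x ∈ Set.Icc u v, h x ≤ c₂ := hxmax
  have hc₂pos : 0 < c₂ := lt_of_lt_of_le hc₁pos (hc₁ xM hxMI)
  have hQpos : 0 < Qconst r :=
    mul_pos (Real.rpow_pos_of_pos two_pos _) (inv_pos.mpr (by linarith))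
  set ρ : ℝ := (c₂ / c₁) ^ (r + 1)⁻¹ with hρdef
  have hρpos : 0 < ρ := Real.rpow_pos_of_pos (div_pos hc₂pos hc₁pos) _
  have hρp : ρ ^ (r + 1) = c₂ / c₁ := by
    rw [hρdef, ← Real.rpow_mul (div_pos hc₂pos hc₁pos).le,
      inv_mul_cancel₀ hp0.ne', Real.rpow_one]
  set ME := ∫⁻ x, ENNReal.ofReal (|x - u| ^ r) ∂μ with hMEdef
  have hMEfin : ME ≠ ⊤ := GL_ME_fin hr0 hmom u
  set M := ME.toReal with hMdef
  have hM0 : 0 ≤ M := ENNReal.toReal_nonneg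
  rw [Metric.tendsto_atTop]
  intro ε hε
  set K := Qconst r * (ρ * (v - u)) ^ (r + 1) with hKdef
  have hKpos : 0 < K := by
    apply mul_pos hQpos
    apply Real.rpow_pos_of_pos
    have : 0 < v - u := by linarith
    positivity
  set ε' := ε / (2 * K) with hε'def
  have hε'pos : 0 < ε' := div_pos hε (by linarith)
  have hucont := isCompact_Icc.uniformContinuousOn_of_continuous hcont
  rw [Metric.uniformContinuousOn_iff] at hucont
  obtain ⟨δ, hδpos, hδ⟩ := hucont ε' hε'pos
  obtain ⟨N₀, hN₀⟩ := exists_nat_gt (M / (c₁ * (Qconst r * (δ/2) ^ (r + 1))))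
  refine ⟨max (max m 1) N₀, fun n hn => ?_⟩
  have hnm : m ≤ n := le_trans (le_trans (le_max_left m 1) (le_max_left _ N₀)) hn
  have hn1 : 1 ≤ n := le_trans (le_trans (le_max_right m 1) (le_max_left _ N₀)) hn
  have hnN₀ : N₀ ≤ n := le_trans (le_max_right _ N₀) hn
  obtain ⟨hquant, hcard, hOC, hopt, heq⟩ := hq n (by omega)
  set Dn := distortionE μ (q n) r with hDndef
  have hrange_fin : (Set.range (q n)).Finite := Set.finite_of_encard_eq_coe hcard
  have hDle : Dn ≤ ME := GL_distortion_le hr0 hquant.1 hrange_fin hopt u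
  have hDfin : Dn ≠ ⊤ := ne_top_of_le_ne_top hMEfin hDle
  have hDpos : Dn ≠ 0 := GL_D_pos hμ hr0 hquant.1 hrange_fin
  set J := Jcells q (Set.Icc u v) n with hJdef
  have hJsub : J ⊆ Set.range (q n) := fun a ha => ha.1
  have hJfin : J.Finite := hrange_fin.subset hJsub
  have hJne : J.Nonempty := hm n hnm
  have hne0 : (n : ℝ≥0∞) ≠ 0 := by
    simp only [ne_eq, Nat.cast_eq_zero]
    omega
  have hDdivfin : Dn / (n : ℝ≥0∞) ≠ ⊤ := (ENNReal.div_lt_top hDfin hne0).ne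
  have hDdivpos : Dn / (n : ℝ≥0∞) ≠ 0 := by
    simp only [ne_eq, ENNReal.div_eq_zero_iff, not_or]
    exact ⟨hDpos, ENNReal.natCast_ne_top n⟩
  set t := (Dn / (n : ℝ≥0∞)).toReal with htdef
  have ht0 : 0 ≤ t := ENNReal.toReal_nonneg
  have ht_le : t ≤ M / n := by
    rw [htdef, ENNReal.toReal_div]
    rw [ENNReal.toReal_natCast]
    have h1 : Dn.toReal ≤ M := ENNReal.toReal_mono hMEfin hDle
    have h2 : (0:ℝ) < n := by exact_mod_cast Nat.pos_of_ne_zero (by omega)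
    gcongr
  -- rewrite exponent 1 + r into r + 1 everywhere in the goal
  rw [show (1:ℝ) + r = r + 1 from by ring]
  have hcell : ∀ a ∈ J, a ∈ Set.Icc u v ∧
      volume ((q n) ⁻¹' {a}) = ENNReal.ofReal (Metric.diam ((q n) ⁻¹' {a})) ∧
      (∀ c : ℝ, (∀ x ∈ Set.Icc u v, |x - a| ≤ Metric.diam ((q n) ⁻¹' {a}) → c ≤ h x) →
        ENNReal.ofReal c * ENNReal.ofReal (Qconst r * Metric.diam ((q n) ⁻¹' {a}) ^ (r+1))
          ≤ cellMoment μ r ((q n) ⁻¹' {a}) a) ∧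
      (∀ c : ℝ, (∀ x ∈ Set.Icc u v, |x - a| ≤ Metric.diam ((q n) ⁻¹' {a}) → h x ≤ c) →
        cellMoment μ r ((q n) ⁻¹' {a}) a ≤
          ENNReal.ofReal c * ENNReal.ofReal (Qconst r * Metric.diam ((q n) ⁻¹' {a}) ^ (r+1))) := by
    intro a ha
    have hCne : ((q n) ⁻¹' {a}).Nonempty := by
      obtain ⟨x, hx⟩ := ha.1
      exact ⟨x, by simp [hx]⟩
    refine GL_cell hμ hr0 hr1 hcont hCne ha.2 (hOC a ha.1) (hopt a ha.1) ?_ ?_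
    · rw [heq a ha.1]
      exact hDdivpos
    · rw [heq a ha.1]
      exact hDdivfin
  have hmom_t : ∀ a ∈ J, (cellMoment μ r ((q n) ⁻¹' {a}) a).toReal = t := by
    intro a ha
    rw [heq a ha.1]
  set L : ℝ → ℝ := fun a => Metric.diam ((q n) ⁻¹' {a}) with hLdef
  have hL0 : ∀ a : ℝ, 0 ≤ L a := fun a => Metric.diam_nonneg
  have hlow : ∀ a ∈ J, c₁ * (Qconst r * L a ^ (r+1)) ≤ t := by
    intro a ha
    have hb := (hcell a ha).2.2.1 c₁ (fun x hx _ => hc₁ x hx)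
    rw [heq a ha.1, ← ENNReal.ofReal_mul hc₁pos.le] at hb
    exact (ENNReal.ofReal_le_iff_le_toReal hDdivfin).mp hb
  have hup2 : ∀ a ∈ J, t ≤ c₂ * (Qconst r * L a ^ (r+1)) := by
    intro a ha
    have hb := (hcell a ha).2.2.2 c₂ (fun x hx _ => hc₂ x hx)
    rw [heq a ha.1, ← ENNReal.ofReal_mul hc₂pos.le] at hb
    calc t ≤ (ENNReal.ofReal (c₂ * (Qconst r * L a ^ (r+1)))).toReal :=
          ENNReal.toReal_mono ENNReal.ofReal_ne_top hb
      _ = c₂ * (Qconst r * L a ^ (r+1)) := ENNReal.toReal_ofReal (by positivity)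
  have hLδ : ∀ a ∈ J, L a ≤ δ / 2 := by
    intro a ha
    by_contra hcon
    push_neg at hcon
    set X := c₁ * (Qconst r * (δ/2) ^ (r+1)) with hXdef
    have hXpos : 0 < X := by positivity
    have h1 : X ≤ c₁ * (Qconst r * L a ^ (r+1)) := by
      apply mul_le_mul_of_nonneg_left ?_ hc₁pos.le
      apply mul_le_mul_of_nonneg_left ?_ hQpos.le
      exact Real.rpow_le_rpow (by positivity) hcon.le hp0.le
    have h2 : X ≤ M / n := le_trans (h1.trans (hlow a ha)) ht_le
    have hnpos : (0:ℝ) < n := by exact_mod_cast Nat.pos_of_ne_zero (by omega)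
    have h3 : (n:ℝ) ≤ M / X := by
      rw [le_div_iff₀ hXpos]
      rw [le_div_iff₀ hnpos] at h2
      linarith [h2]
    have h4 : (N₀ : ℝ) ≤ (n : ℝ) := by exact_mod_cast hnN₀
    linarith [hN₀]
  have hval : ∀ a ∈ J, |t - L a ^ (r+1) * h a * Qconst r| ≤ ε' * (Qconst r * L a ^ (r+1)) := by
    intro a ha
    have haI : a ∈ Set.Icc u v := (hcell a ha).1
    have hhb : ∀ x ∈ Set.Icc u v, |x - a| ≤ L a → |h x - h a| ≤ ε' := by
      intro x hx hxa
      have hd : dist x a < δ := by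
        rw [Real.dist_eq]
        calc |x - a| ≤ L a := hxa
          _ ≤ δ/2 := hLδ a ha
          _ < δ := by linarith
      have hc := hδ x hx a haI hd
      rw [Real.dist_eq] at hc
      exact hc.le
    have hQL0 : 0 ≤ Qconst r * L a ^ (r+1) := by positivity
    have hlo : (h a - ε') * (Qconst r * L a ^ (r+1)) ≤ t := by
      rcases le_or_gt (h a - ε') 0 with hc | hc
      · have hnp : (h a - ε') * (Qconst r * L a ^ (r+1)) ≤ 0 :=
          mul_nonpos_of_nonpos_of_nonneg hc hQL0
        linarith
      · have hb := (hcell a ha).2.2.1 (h a - ε') (fun x hx hxa => by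
          have hax := abs_le.mp (hhb x hx hxa)
          linarith [hax.2])
        rw [heq a ha.1, ← ENNReal.ofReal_mul hc.le] at hb
        exact (ENNReal.ofReal_le_iff_le_toReal hDdivfin).mp hb
    have hhi : t ≤ (h a + ε') * (Qconst r * L a ^ (r+1)) := by
      have hha0 : (0:ℝ) ≤ h a + ε' := by linarith [hh0 a]
      have hb := (hcell a ha).2.2.2 (h a + ε') (fun x hx hxa => by
        have hax := abs_le.mp (hhb x hx hxa)
        linarith [hax.1])
      rw [heq a ha.1, ← ENNReal.ofReal_mul hha0] at hb
      calc t ≤ (ENNReal.ofReal ((h a + ε') * (Qconst r * L a ^ (r+1)))).toReal :=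
            ENNReal.toReal_mono ENNReal.ofReal_ne_top hb
        _ = (h a + ε') * (Qconst r * L a ^ (r+1)) := ENNReal.toReal_ofReal (by positivity)
    rw [sub_mul] at hlo
    rw [add_mul] at hhi
    have e : L a ^ (r+1) * h a * Qconst r = h a * (Qconst r * L a ^ (r+1)) := by ring
    rw [abs_le, e]
    constructor
    · linarith
    · linarith
  set F := hJfin.toFinset with hFdef
  have hFmem : ∀ {a : ℝ}, a ∈ F ↔ a ∈ J := fun {a} => hJfin.mem_toFinset
  have hdisj : (F : Set ℝ).PairwiseDisjoint (fun a => (q n) ⁻¹' {a}) := by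
    intro a _ b _ hab
    rw [Function.onFun, Set.disjoint_left]
    intro x hxa hxb
    exact hab (by rw [← (hxa : q n x = a), ← (hxb : q n x = b)])
  have hsumL : ∑ a ∈ F, L a ≤ v - u := by
    have h1 : volume (⋃ a ∈ F, (q n) ⁻¹' {a}) = ∑ a ∈ F, ENNReal.ofReal (L a) := by
      rw [measure_biUnion_finset hdisj (fun a _ => hquant.1 (measurableSet_singleton a))]
      exact Finset.sum_congr rfl (fun a ha => (hcell a (hFmem.mp ha)).2.1)
    have h2 : volume (⋃ a ∈ F, (q n) ⁻¹' {a}) ≤ volume (Set.Icc u v) := by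
      apply measure_mono
      intro x hx
      simp only [mem_iUnion] at hx
      obtain ⟨a, haF, hxa⟩ := hx
      exact (hFmem.mp haF).2 hxa
    rw [h1, Real.volume_Icc, ← ENNReal.ofReal_sum_of_nonneg (fun a _ => hL0 a)] at h2
    exact (ENNReal.ofReal_le_ofReal_iff (by linarith)).mp h2
  have hcardF : (F.card : ℝ) = (J.ncard : ℝ) := by
    rw [Set.ncard_eq_toFinset_card _ hJfin]
  have hn₁pos : 0 < J.ncard := (Set.ncard_pos hJfin).mpr hJne
  have hn₁pos' : (0:ℝ) < (J.ncard : ℝ) := by exact_mod_cast hn₁pos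
  have hLbound : ∀ a ∈ J, (J.ncard : ℝ) * L a ≤ ρ * (v - u) := by
    intro a ha
    have hcross : ∀ b ∈ F, L a ≤ ρ * L b := by
      intro b hb
      have h3 : L a ^ (r+1) ≤ (ρ * L b) ^ (r+1) := by
        rw [Real.mul_rpow hρpos.le (hL0 b), hρp]
        have hc : c₁ * (Qconst r * L a ^ (r+1)) ≤ c₂ * (Qconst r * L b ^ (r+1)) :=
          le_trans (hlow a ha) (hup2 b (hFmem.mp hb))
        calc L a ^ (r+1) = (c₁ * (Qconst r * L a ^ (r+1))) / (c₁ * Qconst r) := by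
              field_simp
          _ ≤ (c₂ * (Qconst r * L b ^ (r+1))) / (c₁ * Qconst r) := by
              apply div_le_div_of_nonneg_right hc ?_ |>.trans_eq rfl
              positivity
          _ = c₂ / c₁ * L b ^ (r+1) := by
              field_simp
      by_contra hcon
      push_neg at hcon
      have := Real.rpow_lt_rpow (by positivity) hcon hp0
      linarith
    have hconst : (J.ncard : ℝ) * L a = ∑ _b ∈ F, L a := by
      rw [Finset.sum_const, nsmul_eq_mul, hcardF]
    calc (J.ncard : ℝ) * L a = ∑ _b ∈ F, L a := hconst
      _ ≤ ∑ b ∈ F, ρ * L b := Finset.sum_le_sum (fun b hb => hcross b hb)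
      _ = ρ * ∑ b ∈ F, L b := by rw [← Finset.mul_sum]
      _ ≤ ρ * (v - u) := mul_le_mul_of_nonneg_left hsumL hρpos.le
  -- final assembly
  set S := (fun a : ℝ =>
      |(cellMoment μ r ((q n) ⁻¹' {a}) a).toReal -
        Metric.diam ((q n) ⁻¹' {a}) ^ (r+1) * h a * Qconst r|) '' J with hSdef
  have hSne : S.Nonempty := hJne.image _
  have hSbdd : BddAbove S := (hJfin.image _).bddAbove
  have hQLbound : ∀ a ∈ J, Qconst r * L a ^ (r+1) ≤ K / (J.ncard : ℝ) ^ (r+1) := by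
    intro a ha
    have h1 : L a ≤ ρ * (v - u) / (J.ncard : ℝ) := by
      rw [le_div_iff₀ hn₁pos']
      linarith [hLbound a ha]
    have h2 : L a ^ (r+1) ≤ (ρ * (v - u) / (J.ncard : ℝ)) ^ (r+1) :=
      Real.rpow_le_rpow (hL0 a) h1 hp0.le
    have h3 : (ρ * (v - u) / (J.ncard : ℝ)) ^ (r+1)
        = (ρ * (v - u)) ^ (r+1) / (J.ncard : ℝ) ^ (r+1) :=
      Real.div_rpow (mul_nonneg hρpos.le (by linarith)) hn₁pos'.le (r+1)
    rw [hKdef]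
    rw [h3] at h2
    calc Qconst r * L a ^ (r+1)
        ≤ Qconst r * ((ρ * (v - u)) ^ (r+1) / (J.ncard : ℝ) ^ (r+1)) :=
          mul_le_mul_of_nonneg_left h2 hQpos.le
      _ = Qconst r * (ρ * (v - u)) ^ (r+1) / (J.ncard : ℝ) ^ (r+1) := by ring
  have hsup_le : sSup S ≤ ε' * K / (J.ncard : ℝ) ^ (r+1) := by
    apply csSup_le hSne
    rintro val ⟨a, ha, rfl⟩
    dsimp only
    rw [hmom_t a ha]
    calc |t - Metric.diam ((q n) ⁻¹' {a}) ^ (r+1) * h a * Qconst r|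
        ≤ ε' * (Qconst r * L a ^ (r+1)) := hval a ha
      _ ≤ ε' * (K / (J.ncard : ℝ) ^ (r+1)) :=
          mul_le_mul_of_nonneg_left (hQLbound a ha) hε'pos.le
      _ = ε' * K / (J.ncard : ℝ) ^ (r+1) := by ring
  have hsup0 : 0 ≤ sSup S := by
    obtain ⟨val, hval'⟩ := hSne
    have : 0 ≤ val := by
      obtain ⟨a, _, rfl⟩ := hval'
      positivity
    exact le_trans this (le_csSup hSbdd hval')
  have hpow_pos : (0:ℝ) < (J.ncard : ℝ) ^ (r+1) := Real.rpow_pos_of_pos hn₁pos' _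
  rw [dist_zero_right, Real.norm_eq_abs, abs_of_nonneg (by positivity)]
  calc (J.ncard : ℝ) ^ (r+1) * sSup S
      ≤ (J.ncard : ℝ) ^ (r+1) * (ε' * K / (J.ncard : ℝ) ^ (r+1)) :=
        mul_le_mul_of_nonneg_left hsup_le hpow_pos.le
    _ = ε' * K := by field_simp
    _ = ε / 2 := by
        rw [hε'def]
        field_simp
    _ < ε := by linarith
end

section
/- Under the same hypotheses (μ weakly unimodal, r > 1, (q_n) the Gersho quantizer sequence, I ⊆ interior of supp μ compact, J_{n,I} ≠ ∅ for n ≥ m), define ε₃(n) = max{ | ∫_{q_n⁻¹(a)} h^{1/(1+r)} dλ − diam(q_n⁻¹(a)) · h(a)^{1/(1+r)} | : a ∈ J_{n,I} }. Then n₁^I(n) · ε₃(n) → 0 as n → ∞, and moreover limsup_{n→∞} ε₃(n) / min{diam(q_n⁻¹(a)) : a ∈ J_{n,I}} = 0. -/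
open MeasureTheory Set Filter Topology
open scoped ENNReal NNReal

section GershoAux15

open intervalIntegral

private lemma myContRpow {r : ℝ} (hr : 0 < r) : Continuous (fun t : ℝ => t ^ r) := by
  rw [continuous_iff_continuousAt]
  intro x
  exact Real.continuousAt_rpow_const x r (Or.inr hr.le)

private lemma integral_sub_rpow {r : ℝ} (hr : 0 < r) {a b : ℝ} (hab : a ≤ b) :
    ∫ x in Set.Ioo a b, (b - x) ^ r = (b - a) ^ (r + 1) / (r + 1) := by
  rw [← MeasureTheory.integral_Ioc_eq_integral_Ioo, ← intervalIntegral.integral_of_le hab,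
    intervalIntegral.integral_comp_sub_left (fun t => t ^ r) b]
  rw [sub_self, integral_rpow (Or.inl (by linarith : (-1:ℝ) < r)),
    Real.zero_rpow (by positivity : r + 1 ≠ 0)]
  ring

private lemma integral_sub_rpow' {r : ℝ} (hr : 0 < r) {a b : ℝ} (hab : a ≤ b) :
    ∫ x in Set.Ioo a b, (x - a) ^ r = (b - a) ^ (r + 1) / (r + 1) := by
  rw [← MeasureTheory.integral_Ioc_eq_integral_Ioo, ← intervalIntegral.integral_of_le hab,
    intervalIntegral.integral_comp_sub_right (fun t => t ^ r) a]
  rw [sub_self, integral_rpow (Or.inl (by linarith : (-1:ℝ) < r)),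
    Real.zero_rpow (by positivity : r + 1 ≠ 0)]
  ring

/-- Lower bound for `∫⁻_{Ioo α β} |x-b|^r dλ`, uniform in `b`. -/
private lemma lintegral_abs_rpow_lower {r : ℝ} (hr : 0 < r) {α β : ℝ} (hαβ : α < β) (b : ℝ) :
    ENNReal.ofReal ((2:ℝ)^(-(1+r)) * (1+r)⁻¹ * (β - α)^(1+r)) ≤
      ∫⁻ x in Set.Ioo α β, ENNReal.ofReal (|x - b| ^ r) := by
  set mid := (α + β) / 2 with hmid
  have hαm : α < mid := by simp only [hmid]; linarith
  have hmβ : mid < β := by simp only [hmid]; linarith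
  have hval : (2:ℝ)^(-(1+r)) * (1+r)⁻¹ * (β - α)^(1+r) = ((β - α)/2)^(1+r) / (1+r) := by
    rw [Real.div_rpow (by linarith) (by norm_num), Real.rpow_neg (by norm_num)]
    field_simp
  rcases le_total b mid with hb | hb
  · -- use the right half `Ioo mid β`, where `|x - b| ≥ x - mid`
    have hsub : Set.Ioo mid β ⊆ Set.Ioo α β := Set.Ioo_subset_Ioo hαm.le le_rfl
    calc ENNReal.ofReal ((2:ℝ)^(-(1+r)) * (1+r)⁻¹ * (β - α)^(1+r))
        = ENNReal.ofReal (∫ x in Set.Ioo mid β, (x - mid) ^ r) := by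
          rw [integral_sub_rpow' hr hmβ.le, hval]
          have h2 : β - mid = (β - α) / 2 := by simp only [hmid]; ring
          rw [h2, add_comm r 1]
      _ ≤ ∫⁻ x in Set.Ioo mid β, ENNReal.ofReal ((x - mid) ^ r) := by
          rw [ofReal_integral_eq_lintegral_ofReal]
          · exact ((myContRpow hr).comp
              (continuous_id.sub continuous_const)).integrableOn_Icc.mono_set
              Set.Ioo_subset_Icc_self
          · filter_upwards [ae_restrict_mem measurableSet_Ioo] with x hx
            exact Real.rpow_nonneg (by linarith [hx.1]) r
      _ ≤ ∫⁻ x in Set.Ioo mid β, ENNReal.ofReal (|x - b| ^ r) := by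
          refine setLIntegral_mono' measurableSet_Ioo fun x hx => ?_
          refine ENNReal.ofReal_le_ofReal (Real.rpow_le_rpow (by linarith [hx.1]) ?_ hr.le)
          have : x - mid ≤ x - b := by linarith
          exact this.trans (le_abs_self _)
      _ ≤ ∫⁻ x in Set.Ioo α β, ENNReal.ofReal (|x - b| ^ r) := lintegral_mono_set hsub
  · -- use the left half `Ioo α mid`, where `|x - b| ≥ mid - x`
    have hsub : Set.Ioo α mid ⊆ Set.Ioo α β := Set.Ioo_subset_Ioo le_rfl hmβ.le
    calc ENNReal.ofReal ((2:ℝ)^(-(1+r)) * (1+r)⁻¹ * (β - α)^(1+r))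
        = ENNReal.ofReal (∫ x in Set.Ioo α mid, (mid - x) ^ r) := by
          rw [integral_sub_rpow hr hαm.le, hval]
          have h2 : mid - α = (β - α) / 2 := by simp only [hmid]; ring
          rw [h2, add_comm r 1]
      _ ≤ ∫⁻ x in Set.Ioo α mid, ENNReal.ofReal ((mid - x) ^ r) := by
          rw [ofReal_integral_eq_lintegral_ofReal]
          · exact ((myContRpow hr).comp
              (continuous_const.sub continuous_id)).integrableOn_Icc.mono_set
              Set.Ioo_subset_Icc_self
          · filter_upwards [ae_restrict_mem measurableSet_Ioo] with x hx
            exact Real.rpow_nonneg (by linarith [hx.2]) r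
      _ ≤ ∫⁻ x in Set.Ioo α mid, ENNReal.ofReal (|x - b| ^ r) := by
          refine setLIntegral_mono' measurableSet_Ioo fun x hx => ?_
          refine ENNReal.ofReal_le_ofReal (Real.rpow_le_rpow (by linarith [hx.2]) ?_ hr.le)
          have h1 : mid - x ≤ b - x := by linarith
          calc mid - x ≤ b - x := h1
            _ ≤ |b - x| := le_abs_self _
            _ = |x - b| := abs_sub_comm b x
      _ ≤ ∫⁻ x in Set.Ioo α β, ENNReal.ofReal (|x - b| ^ r) := lintegral_mono_set hsub

/-- The key geometric facts about a Gersho codecell contained in `[u,v]`. -/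
private lemma cellFacts (μ : Measure ℝ) [IsProbabilityMeasure μ] {r : ℝ} (hr : 1 < r)
    (h : ℝ → ℝ) (hμ : μ = volume.withDensity fun x => ENNReal.ofReal (h x))
    {u v : ℝ} {c₁ c₂ : ℝ} (hc₁ : 0 < c₁)
    (hc1h : ∀ x ∈ Set.Icc u v, c₁ ≤ h x) (hc2h : ∀ x ∈ Set.Icc u v, h x ≤ c₂)
    (hhae : AEMeasurable (fun x => ENNReal.ofReal (h x)) (volume.restrict (Set.Icc u v)))
    {C : Set ℝ} (hCm : MeasurableSet C) (hsub : C ⊆ Set.Icc u v) (hord : C.OrdConnected)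
    {a : ℝ} (hmin : ∀ b : ℝ, cellMoment μ r C a ≤ cellMoment μ r C b)
    {e : ℝ≥0∞} (heq : cellMoment μ r C a = e) (he0 : e ≠ 0) :
    a ∈ Set.Icc u v ∧
    0 < Metric.diam C ∧
    volume C = ENNReal.ofReal (Metric.diam C) ∧
    (∀ x ∈ C, |x - a| ≤ Metric.diam C) ∧
    ENNReal.ofReal (c₁ * ((2:ℝ)^(-(1+r)) * (1+r)⁻¹) * Metric.diam C ^ (1+r)) ≤ e ∧
    e ≤ ENNReal.ofReal (c₂ * Metric.diam C ^ (1+r)) := by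
  have hrpos : (0:ℝ) < r := by linarith
  have hμC : μ C ≠ 0 := by
    intro h0
    apply he0
    rw [← heq, cellMoment, Measure.restrict_eq_zero.2 h0, lintegral_zero_measure]
  have hCne : C.Nonempty := by
    rw [Set.nonempty_iff_ne_empty]
    intro hE
    exact hμC (by simp [hE])
  have hbdd : Bornology.IsBounded C := (Metric.isBounded_Icc u v).subset hsub
  have bddA : BddAbove C := ⟨v, fun x hx => (hsub hx).2⟩
  have bddB : BddBelow C := ⟨u, fun x hx => (hsub hx).1⟩
  set α := sInf C with hα_def
  set β := sSup C with hβ_def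
  obtain ⟨x₀, hx₀⟩ := hCne
  have hαuv : u ≤ α := le_csInf ⟨x₀, hx₀⟩ fun x hx => (hsub hx).1
  have hβuv : β ≤ v := csSup_le ⟨x₀, hx₀⟩ fun x hx => (hsub hx).2
  have hIoo : Set.Ioo α β ⊆ C := by
    intro x hx
    obtain ⟨y, hyC, hyx⟩ := exists_lt_of_csInf_lt ⟨x₀, hx₀⟩ hx.1
    obtain ⟨z, hzC, hxz⟩ := exists_lt_of_lt_csSup ⟨x₀, hx₀⟩ hx.2
    exact hord.out hyC hzC ⟨hyx.le, hxz.le⟩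
  have hCIcc : C ⊆ Set.Icc α β := fun x hx => ⟨csInf_le bddB hx, le_csSup bddA hx⟩
  have hvol : volume C = ENNReal.ofReal (β - α) := by
    refine le_antisymm ?_ ?_
    · rw [← Real.volume_Icc]; exact measure_mono hCIcc
    · rw [← Real.volume_Ioo]; exact measure_mono hIoo
  have hvol0 : volume C ≠ 0 := by
    intro h0
    apply hμC
    rw [hμ, withDensity_apply _ hCm, Measure.restrict_eq_zero.2 h0, lintegral_zero_measure]
  have hαβ : α < β := by
    rw [hvol] at hvol0
    by_contra hcon
    exact hvol0 (ENNReal.ofReal_eq_zero.2 (by linarith [not_lt.1 hcon]))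
  have hd : Metric.diam C = β - α := Real.diam_eq hbdd
  have hMeasg : ∀ b : ℝ, Measurable fun x : ℝ => ENNReal.ofReal (|x - b| ^ r) := fun b =>
    ENNReal.measurable_ofReal.comp
      ((myContRpow hrpos).measurable.comp (measurable_id.sub measurable_const).abs)
  have hfin : ∀ b ∈ Set.Icc α β, cellMoment μ r C b ≠ ⊤ := by
    intro b hb
    have hbound : cellMoment μ r C b ≤ ENNReal.ofReal ((β - α) ^ r) * μ C := by
      rw [cellMoment, ← setLIntegral_const C]
      refine setLIntegral_mono' hCm fun x hx => ?_
      refine ENNReal.ofReal_le_ofReal (Real.rpow_le_rpow (abs_nonneg _) ?_ hrpos.le)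
      have h1 := (hCIcc hx).1
      have h2 := (hCIcc hx).2
      rw [abs_le]
      constructor <;> [linarith [hb.2]; linarith [hb.1]]
    exact ne_top_of_le_ne_top
      (ENNReal.mul_ne_top ENNReal.ofReal_ne_top (measure_ne_top μ C)) hbound
  have haIcc : a ∈ Set.Icc α β := by
    by_contra hnot
    rw [Set.mem_Icc, not_and_or] at hnot
    have hres0 : μ.restrict C ≠ 0 := by
      simpa [Measure.restrict_eq_zero] using hμC
    rcases hnot with hlt | hlt
    · push_neg at hlt
      have hstrict : cellMoment μ r C α < cellMoment μ r C a := by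
        refine lintegral_strict_mono hres0 ((hMeasg a).aemeasurable) ?_ ?_
        · exact hfin α ⟨le_rfl, hαβ.le⟩
        · refine (ae_restrict_iff' hCm).2 (ae_of_all _ fun x hx => ?_)
          have hx1 : α ≤ x := (hCIcc hx).1
          rw [abs_of_nonneg (by linarith : (0:ℝ) ≤ x - α),
            abs_of_nonneg (by linarith : (0:ℝ) ≤ x - a)]
          exact (ENNReal.ofReal_lt_ofReal_iff (Real.rpow_pos_of_pos (by linarith) r)).2
            (Real.rpow_lt_rpow (by linarith) (by linarith) hrpos)
      exact absurd (hmin α) (not_le.2 hstrict)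
    · push_neg at hlt
      have hstrict : cellMoment μ r C β < cellMoment μ r C a := by
        refine lintegral_strict_mono hres0 ((hMeasg a).aemeasurable) ?_ ?_
        · exact hfin β ⟨hαβ.le, le_rfl⟩
        · refine (ae_restrict_iff' hCm).2 (ae_of_all _ fun x hx => ?_)
          have hx2 : x ≤ β := (hCIcc hx).2
          rw [abs_sub_comm x β, abs_of_nonneg (by linarith : (0:ℝ) ≤ β - x),
            abs_sub_comm x a, abs_of_nonneg (by linarith : (0:ℝ) ≤ a - x)]
          exact (ENNReal.ofReal_lt_ofReal_iff (Real.rpow_pos_of_pos (by linarith) r)).2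
            (Real.rpow_lt_rpow (by linarith) (by linarith) hrpos)
      exact absurd (hmin β) (not_le.2 hstrict)
  have habs : ∀ x ∈ C, |x - a| ≤ Metric.diam C := by
    intro x hx
    rw [hd, abs_le]
    have h1 := (hCIcc hx).1
    have h2 := (hCIcc hx).2
    constructor <;> [linarith [haIcc.2]; linarith [haIcc.1]]
  have hwae : AEMeasurable (fun x => ENNReal.ofReal (h x)) (volume.restrict C) :=
    hhae.mono_measure (Measure.restrict_mono hsub le_rfl)
  have hmom_eq : cellMoment μ r C a =
      ∫⁻ x in C, (ENNReal.ofReal (h x)) * ENNReal.ofReal (|x - a| ^ r) := by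
    rw [cellMoment, hμ]
    show ∫⁻ x, ENNReal.ofReal (|x - a| ^ r)
        ∂((volume.withDensity fun x => ENNReal.ofReal (h x)).restrict C) = _
    rw [restrict_withDensity hCm,
      lintegral_withDensity_eq_lintegral_mul₀ hwae ((hMeasg a).aemeasurable)]
    rfl
  have hβα1r : (β - α) ^ ((1:ℝ) + r) = (β - α) * (β - α) ^ r := by
    rw [Real.rpow_add (by linarith) 1 r, Real.rpow_one]
  have hc₂0 : 0 ≤ c₂ :=
    le_trans hc₁.le (le_trans (hc1h x₀ (hsub hx₀)) (hc2h x₀ (hsub hx₀)))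
  have hβα0 : (0:ℝ) ≤ β - α := by linarith
  refine ⟨⟨by linarith [haIcc.1], by linarith [haIcc.2]⟩, by rw [hd]; linarith,
    by rw [hd, hvol], habs, ?_, ?_⟩
  · -- lower bound
    rw [← heq, hmom_eq, hd]
    calc ENNReal.ofReal (c₁ * ((2:ℝ)^(-(1+r)) * (1+r)⁻¹) * (β - α) ^ (1+r))
        = ENNReal.ofReal c₁ *
            ENNReal.ofReal ((2:ℝ)^(-(1+r)) * (1+r)⁻¹ * (β - α) ^ (1+r)) := by
          rw [← ENNReal.ofReal_mul hc₁.le]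
          ring_nf
      _ ≤ ENNReal.ofReal c₁ * ∫⁻ x in Set.Ioo α β, ENNReal.ofReal (|x - a| ^ r) :=
          mul_le_mul_right (lintegral_abs_rpow_lower hrpos hαβ a) _
      _ = ∫⁻ x in Set.Ioo α β, ENNReal.ofReal c₁ * ENNReal.ofReal (|x - a| ^ r) :=
          (lintegral_const_mul' _ _ ENNReal.ofReal_ne_top).symm
      _ ≤ ∫⁻ x in Set.Ioo α β, ENNReal.ofReal (h x) * ENNReal.ofReal (|x - a| ^ r) := by
          refine setLIntegral_mono' measurableSet_Ioo fun x hx => ?_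
          exact mul_le_mul_left
            (ENNReal.ofReal_le_ofReal (hc1h x (hsub (hIoo hx)))) _
      _ ≤ ∫⁻ x in C, ENNReal.ofReal (h x) * ENNReal.ofReal (|x - a| ^ r) :=
          lintegral_mono_set hIoo
  · -- upper bound
    rw [← heq, hmom_eq, hd]
    calc ∫⁻ x in C, ENNReal.ofReal (h x) * ENNReal.ofReal (|x - a| ^ r)
        ≤ ∫⁻ _x in C, ENNReal.ofReal c₂ * ENNReal.ofReal ((β - α) ^ r) := by
          refine setLIntegral_mono' hCm fun x hx => ?_
          refine mul_le_mul' (ENNReal.ofReal_le_ofReal (hc2h x (hsub hx)))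
            (ENNReal.ofReal_le_ofReal
              (Real.rpow_le_rpow (abs_nonneg _) (by rw [← hd]; exact habs x hx) hrpos.le))
      _ = ENNReal.ofReal c₂ * ENNReal.ofReal ((β - α) ^ r) * volume C :=
          setLIntegral_const C _
      _ = ENNReal.ofReal (c₂ * (β - α) ^ (1+r)) := by
          rw [hvol, ← ENNReal.ofReal_mul hc₂0,
            ← ENNReal.ofReal_mul (mul_nonneg hc₂0 (Real.rpow_nonneg hβα0 r))]
          congr 1
          rw [hβα1r]
          ring

private lemma tendstoZeroOfBounds {f : ℕ → ℝ} {c : ℝ} (hc : 0 < c)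
    (H : ∀ ε : ℝ, 0 < ε → ∀ᶠ n in atTop, 0 ≤ f n ∧ f n ≤ c * ε) :
    Tendsto f atTop (nhds 0) := by
  rw [Metric.tendsto_atTop]
  intro ε hε
  obtain ⟨N, hN⟩ := eventually_atTop.1 (H (ε / (2 * c)) (by positivity))
  refine ⟨N, fun n hn => ?_⟩
  obtain ⟨h0, h1⟩ := hN n hn
  rw [Real.dist_eq, sub_zero, abs_of_nonneg h0]
  have : c * (ε / (2 * c)) = ε / 2 := by field_simp
  calc f n ≤ c * (ε / (2 * c)) := h1
    _ = ε / 2 := this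
    _ < ε := by linarith

end GershoAux15

theorem gersho_stmt_15 (μ : Measure ℝ) [IsProbabilityMeasure μ]
    (r : ℝ) (hr : 1 < r) (hmom : Integrable (fun x => |x| ^ r) μ)
    (h : ℝ → ℝ) (hh0 : ∀ x, 0 ≤ h x)
    (hμ : μ = volume.withDensity (fun x => ENNReal.ofReal (h x)))
    (hwu : WeaklyUnimodal h)
    (q : ℕ → ℝ → ℝ) (hq : ∀ n : ℕ, 0 < n → IsGersho μ r n (q n))
    (u v : ℝ) (huv : u < v) (hI : Set.Icc u v ⊆ interior (msupp μ))
    (m : ℕ) (hm : ∀ n ≥ m, (Jcells q (Set.Icc u v) n).Nonempty)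
    (ε₃ : ℕ → ℝ)
    (hε₃ : ∀ n : ℕ, ε₃ n = sSup ((fun a : ℝ =>
      |(∫ x in (q n) ⁻¹' {a}, h x ^ (1 / (1 + r))) -
        Metric.diam ((q n) ⁻¹' {a}) * h a ^ (1 / (1 + r))|) '' Jcells q (Set.Icc u v) n)) :
    Tendsto (fun n : ℕ => ((Jcells q (Set.Icc u v) n).ncard : ℝ) * ε₃ n) atTop (nhds 0) ∧
    Filter.limsup
      (fun n : ℕ => ε₃ n /
        sInf ((fun a : ℝ => Metric.diam ((q n) ⁻¹' {a})) '' Jcells q (Set.Icc u v) n))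
      atTop = 0 := by
  classical
  have hrpos : (0:ℝ) < r := by linarith
  have h1r : (0:ℝ) < 1 + r := by linarith
  -- positivity and continuity of the density on the interior of the support
  have hfind : ∀ a b : ℝ, a < b → Set.Ioo a b ⊆ msupp μ → ∃ y ∈ Set.Ioo a b, 0 < h y := by
    intro a b hab hsub
    by_contra hcon
    push_neg at hcon
    have hmem : (a + b) / 2 ∈ msupp μ := hsub ⟨by linarith, by linarith⟩
    have hposμ := hmem (Set.Ioo a b) (Ioo_mem_nhds (by linarith) (by linarith))
    have hz : μ (Set.Ioo a b) = 0 := by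
      rw [hμ, withDensity_apply _ measurableSet_Ioo]
      have : ∫⁻ x in Set.Ioo a b, ENNReal.ofReal (h x) =
          ∫⁻ x in Set.Ioo a b, (0 : ℝ≥0∞) := by
        refine setLIntegral_congr_fun measurableSet_Ioo (fun y hy => ?_)
        have h0 : h y = 0 := le_antisymm (hcon y hy) (hh0 y)
        simp [h0]
      rw [this, lintegral_zero]
    rw [hz] at hposμ
    exact lt_irrefl 0 hposμ
  have hpos : ∀ x ∈ interior (msupp μ), 0 < h x := by
    intro x hx
    obtain ⟨ε, hε, hball⟩ := Metric.isOpen_iff.1 isOpen_interior x hx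
    have hsub : Set.Ioo (x - ε) (x + ε) ⊆ msupp μ := by
      intro y hy
      refine interior_subset (hball ?_)
      rw [Metric.mem_ball, Real.dist_eq, abs_lt]
      constructor <;> [linarith [hy.1]; linarith [hy.2]]
    obtain ⟨y₁, hy₁, hy₁pos⟩ := hfind (x - ε) x (by linarith)
      (fun z hz => hsub ⟨hz.1, by linarith [hz.2]⟩)
    obtain ⟨y₂, hy₂, hy₂pos⟩ := hfind x (x + ε) (by linarith)
      (fun z hz => hsub ⟨by linarith [hz.1], hz.2⟩)
    obtain ⟨l₀, hl₀, hlev⟩ := hwu.2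
    set l := min (min (h y₁) (h y₂)) l₀ / 2 with hl_def
    have hlpos : 0 < l := by
      apply div_pos _ (by norm_num)
      exact lt_min (lt_min hy₁pos hy₂pos) hl₀
    have hll₀ : l < l₀ := by
      have h1 : l ≤ l₀ / 2 := by
        rw [hl_def]
        gcongr
        exact min_le_right _ _
      linarith
    obtain ⟨-, hconn⟩ := hlev l hlpos hll₀
    have hmem₁ : y₁ ∈ {z | l ≤ h z} := by
      simp only [Set.mem_setOf_eq, hl_def]
      calc min (min (h y₁) (h y₂)) l₀ / 2 ≤ min (min (h y₁) (h y₂)) l₀ := by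
            refine div_le_self ?_ (by norm_num)
            positivity
        _ ≤ h y₁ := le_trans (min_le_left _ _) (min_le_left _ _)
    have hmem₂ : y₂ ∈ {z | l ≤ h z} := by
      simp only [Set.mem_setOf_eq, hl_def]
      calc min (min (h y₁) (h y₂)) l₀ / 2 ≤ min (min (h y₁) (h y₂)) l₀ := by
            refine div_le_self ?_ (by norm_num)
            positivity
        _ ≤ h y₂ := le_trans (min_le_left _ _) (min_le_right _ _)
    exact lt_of_lt_of_le hlpos (hconn.out hmem₁ hmem₂ ⟨hy₁.2.le, hy₂.1.le⟩)
  have hcontAt : ∀ x ∈ interior (msupp μ), ContinuousAt h x := by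
    intro x hx
    have hsubsupp : interior (msupp μ) ⊆ tsupport h := fun y hy =>
      subset_closure (by simpa [Function.mem_support] using (hpos y hy).ne')
    exact hwu.1.continuousAt (mem_nhds_iff.2 ⟨_, hsubsupp, isOpen_interior, hx⟩)
  -- constants on K = [u,v]
  have hKcomp : IsCompact (Set.Icc u v) := isCompact_Icc
  have hKne : (Set.Icc u v).Nonempty := Set.nonempty_Icc.2 huv.le
  have hcontK : ContinuousOn h (Set.Icc u v) := fun x hx =>
    (hcontAt x (hI hx)).continuousWithinAt
  obtain ⟨x₁, hx₁K, hx₁min⟩ := hKcomp.exists_isMinOn hKne hcontK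
  obtain ⟨x₂, hx₂K, hx₂max⟩ := hKcomp.exists_isMaxOn hKne hcontK
  set c₁ : ℝ := h x₁ with hc₁_def
  set c₂ : ℝ := h x₂ with hc₂_def
  have hc₁pos : 0 < c₁ := hpos x₁ (hI hx₁K)
  have hc1h : ∀ x ∈ Set.Icc u v, c₁ ≤ h x := fun x hx => hx₁min hx
  have hc2h : ∀ x ∈ Set.Icc u v, h x ≤ c₂ := fun x hx => hx₂max hx
  have hc₂pos : 0 < c₂ := lt_of_lt_of_le hc₁pos (le_trans (hc1h x₁ hx₁K) (hc2h x₁ hx₁K))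
  -- the function g = h^p
  set p : ℝ := 1 / (1 + r) with hp_def
  have hppos : 0 < p := by positivity
  set g : ℝ → ℝ := fun x => h x ^ p with hg_def
  have hgK : ContinuousOn g (Set.Icc u v) :=
    hcontK.rpow_const fun x _ => Or.inr hppos.le
  have hgu : UniformContinuousOn g (Set.Icc u v) :=
    hKcomp.uniformContinuousOn_of_continuous hgK
  have hhaeK : AEMeasurable (fun x => ENNReal.ofReal (h x))
      (volume.restrict (Set.Icc u v)) :=
    ENNReal.measurable_ofReal.comp_aemeasurable (hcontK.aemeasurable measurableSet_Icc)
  have hgae : AEMeasurable g (volume.restrict (Set.Icc u v)) :=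
    hgK.aemeasurable measurableSet_Icc
  -- moment bound M
  set M : ℝ≥0∞ := ∫⁻ x, ENNReal.ofReal (|x| ^ r) ∂μ with hM_def
  have hMne : M ≠ ⊤ := by
    have hfi := hmom.hasFiniteIntegral
    rw [HasFiniteIntegral] at hfi
    have hMeq : M = ∫⁻ x, ‖|x| ^ r‖ₑ ∂μ :=
      lintegral_congr fun x =>
        (Real.enorm_eq_ofReal (Real.rpow_nonneg (abs_nonneg x) r)).symm
    rw [hMeq]
    exact hfi.ne
  -- distortion bounds
  have hDM : ∀ n : ℕ, 0 < n → distortionE μ (q n) r ≤ M := by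
    intro n hn
    obtain ⟨⟨hqm, hqc⟩, hcard, hord, hminq, heqq⟩ := hq n hn
    haveI := hqc.to_subtype
    have hFmeas : Measurable (fun x => ENNReal.ofReal (|x - q n x| ^ r)) :=
      ENNReal.measurable_ofReal.comp
        ((myContRpow hrpos).measurable.comp (measurable_id.sub hqm).abs)
    set s : Set.range (q n) → Set ℝ := fun a => q n ⁻¹' {(a : ℝ)} with hs_def
    have hsm : ∀ i, MeasurableSet (s i) := fun i => hqm (measurableSet_singleton _)
    have hdisj : Pairwise (Function.onFun Disjoint s) := by
      intro i j hij
      refine Set.disjoint_left.2 fun x hxi hxj => hij ?_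
      exact Subtype.ext (by rw [← hxi, ← hxj])
    have hcover : (⋃ i, s i) = Set.univ :=
      Set.eq_univ_of_forall fun x => Set.mem_iUnion.2 ⟨⟨q n x, Set.mem_range_self x⟩, rfl⟩
    have hsplit : ∀ F : ℝ → ℝ≥0∞, ∫⁻ x, F x ∂μ = ∑' i, ∫⁻ x in s i, F x ∂μ := by
      intro F
      rw [← setLIntegral_univ, ← hcover, lintegral_iUnion hsm hdisj]
    have hGmeas : Measurable (fun x : ℝ => ENNReal.ofReal (|x| ^ r)) :=
      ENNReal.measurable_ofReal.comp ((myContRpow hrpos).measurable.comp measurable_id.abs)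
    calc distortionE μ (q n) r
        = ∑' i, ∫⁻ x in s i, ENNReal.ofReal (|x - q n x| ^ r) ∂μ := hsplit _
      _ = ∑' i : Set.range (q n), cellMoment μ r (s i) i := by
          refine tsum_congr fun i => ?_
          refine setLIntegral_congr_fun (hsm i) (fun x hx => ?_)
          have hqx : q n x = (i : ℝ) := hx
          rw [hqx]
      _ ≤ ∑' i : Set.range (q n), cellMoment μ r (s i) 0 :=
          ENNReal.tsum_le_tsum fun i => hminq (i : ℝ) i.2 0
      _ = ∑' i, ∫⁻ x in s i, ENNReal.ofReal (|x| ^ r) ∂μ := by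
          simp only [cellMoment, sub_zero]
      _ = M := (hsplit _).symm
  have hD0 : ∀ n : ℕ, 0 < n → distortionE μ (q n) r ≠ 0 := by
    intro n hn hD0eq
    obtain ⟨⟨hqm, hqc⟩, -, -, -, -⟩ := hq n hn
    have hFmeas : Measurable (fun x => ENNReal.ofReal (|x - q n x| ^ r)) :=
      ENNReal.measurable_ofReal.comp
        ((myContRpow hrpos).measurable.comp (measurable_id.sub hqm).abs)
    have hae : (fun x => ENNReal.ofReal (|x - q n x| ^ r)) =ᵐ[μ] 0 :=
      (lintegral_eq_zero_iff hFmeas).1 hD0eq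
    have hrange0 : μ (Set.range (q n)) = 0 := by
      have hv : (volume : Measure ℝ) (Set.range (q n)) = 0 := hqc.measure_zero _
      rw [hμ]
      exact withDensity_absolutelyContinuous volume _ hv
    have h1 : μ {x | ¬ (ENNReal.ofReal (|x - q n x| ^ r) = 0)} = 0 := by
      have h2 := hae
      rw [EventuallyEq] at h2
      simpa [ae_iff] using h2
    have hsub0 : {x | ENNReal.ofReal (|x - q n x| ^ r) = 0} ⊆ Set.range (q n) := by
      intro x hx
      simp only [Set.mem_setOf_eq, ENNReal.ofReal_eq_zero] at hx
      have h2 : |x - q n x| ^ r = 0 :=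
        le_antisymm hx (Real.rpow_nonneg (abs_nonneg _) r)
      have h3 : |x - q n x| = 0 := (Real.rpow_eq_zero (abs_nonneg _) (by positivity)).1 h2
      have h4 : x = q n x := by
        have h5 := abs_eq_zero.1 h3
        linarith [sub_eq_zero.1 h5]
      exact ⟨x, h4.symm⟩
    have hcontr : (1 : ℝ≥0∞) ≤ 0 := by
      calc (1:ℝ≥0∞) = μ Set.univ := measure_univ.symm
        _ ≤ μ {x | ENNReal.ofReal (|x - q n x| ^ r) = 0} +
            μ {x | ¬ (ENNReal.ofReal (|x - q n x| ^ r) = 0)} := by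
            rw [← Set.union_compl_self {x | ENNReal.ofReal (|x - q n x| ^ r) = 0}]
            exact measure_union_le _ _
        _ ≤ 0 + 0 := add_le_add (le_trans (measure_mono hsub0) hrange0.le) h1.le
        _ = 0 := by simp
    simp at hcontr
  have he0 : ∀ n : ℕ, 0 < n → distortionE μ (q n) r / (n : ℝ≥0∞) ≠ 0 := by
    intro n hn h0
    rcases ENNReal.div_eq_zero_iff.1 h0 with h1 | h1
    · exact hD0 n hn h1
    · exact (ENNReal.natCast_ne_top n) h1
  -- apply cellFacts to every cell of J
  set Q' : ℝ := (2:ℝ)^(-(1+r)) * (1+r)⁻¹ with hQ'_def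
  have hQ'pos : 0 < Q' := by
    apply mul_pos (Real.rpow_pos_of_pos (by norm_num) _)
    positivity
  have hcell : ∀ n : ℕ, 0 < n → ∀ a ∈ Jcells q (Set.Icc u v) n,
      a ∈ Set.Icc u v ∧
      0 < Metric.diam ((q n) ⁻¹' {a}) ∧
      volume ((q n) ⁻¹' {a}) = ENNReal.ofReal (Metric.diam ((q n) ⁻¹' {a})) ∧
      (∀ x ∈ (q n) ⁻¹' {a}, |x - a| ≤ Metric.diam ((q n) ⁻¹' {a})) ∧
      ENNReal.ofReal (c₁ * Q' * Metric.diam ((q n) ⁻¹' {a}) ^ (1+r)) ≤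
        distortionE μ (q n) r / (n : ℝ≥0∞) ∧
      distortionE μ (q n) r / (n : ℝ≥0∞) ≤
        ENNReal.ofReal (c₂ * Metric.diam ((q n) ⁻¹' {a}) ^ (1+r)) := by
    intro n hn a ha
    obtain ⟨⟨hqm, hqc⟩, hcard, hord, hminq, heqq⟩ := hq n hn
    exact cellFacts μ hr h hμ hc₁pos hc1h hc2h hhaeK
      (hqm (measurableSet_singleton _)) ha.2 (hord a ha.1) (hminq a ha.1)
      (heqq a ha.1) (he0 n hn)
  have hJfin : ∀ n : ℕ, 0 < n → (Jcells q (Set.Icc u v) n).Finite := by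
    intro n hn
    obtain ⟨⟨hqm, hqc⟩, hcard, -, -, -⟩ := hq n hn
    exact (Set.finite_of_encard_eq_coe hcard).subset fun a ha => ha.1
  -- ratio of diameters
  set R : ℝ := (c₂ / (c₁ * Q')) ^ ((1+r)⁻¹) with hR_def
  have hRpos : 0 < R := Real.rpow_pos_of_pos (by positivity) _
  have hratio : ∀ n : ℕ, 0 < n → ∀ a ∈ Jcells q (Set.Icc u v) n,
      ∀ b ∈ Jcells q (Set.Icc u v) n,
      Metric.diam ((q n) ⁻¹' {a}) ≤ R * Metric.diam ((q n) ⁻¹' {b}) := by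
    intro n hn a ha b hb
    obtain ⟨-, hda, -, -, hlow, -⟩ := hcell n hn a ha
    obtain ⟨-, hdb, -, -, -, hhigh⟩ := hcell n hn b hb
    have hle := le_trans hlow hhigh
    rw [ENNReal.ofReal_le_ofReal_iff (by positivity)] at hle
    have h2 : Metric.diam ((q n) ⁻¹' {a}) ^ (1+r) ≤
        (R * Metric.diam ((q n) ⁻¹' {b})) ^ (1+r) := by
      rw [Real.mul_rpow hRpos.le hdb.le, hR_def,
        Real.rpow_inv_rpow (by positivity) (by positivity)]
      rw [div_mul_eq_mul_div, le_div_iff₀ (by positivity)]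
      nlinarith [hle]
    exact (Real.rpow_le_rpow_iff hda.le (by positivity) h1r).1 h2
  -- eventual smallness of diameters
  have hsmall : ∀ θ : ℝ, 0 < θ → ∀ᶠ n : ℕ in atTop,
      ∀ a ∈ Jcells q (Set.Icc u v) n, Metric.diam ((q n) ⁻¹' {a}) ≤ θ := by
    intro θ hθ
    obtain ⟨N, hN⟩ := exists_nat_ge (M.toReal / (c₁ * Q' * θ^(1+r)))
    rw [eventually_atTop]
    refine ⟨max N 1, fun n hn a ha => ?_⟩
    have hn1 : 0 < n := lt_of_lt_of_le one_pos (le_trans (le_max_right N 1) hn)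
    obtain ⟨-, hda, -, -, hlow, -⟩ := hcell n hn1 a ha
    have h1 : distortionE μ (q n) r / (n : ℝ≥0∞) ≤
        ENNReal.ofReal (c₁ * Q' * θ^(1+r)) := by
      have hMn : M ≤ ENNReal.ofReal (c₁ * Q' * θ^(1+r)) * (n : ℝ≥0∞) := by
        calc M = ENNReal.ofReal M.toReal := (ENNReal.ofReal_toReal hMne).symm
          _ ≤ ENNReal.ofReal ((c₁ * Q' * θ^(1+r)) * n) := by
              refine ENNReal.ofReal_le_ofReal ?_
              have hpos' : (0:ℝ) < c₁ * Q' * θ^(1+r) := by positivity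
              have h2 : M.toReal ≤ (N:ℝ) * (c₁ * Q' * θ^(1+r)) :=
                (div_le_iff₀ hpos').1 hN
              have h3 : (N:ℝ) ≤ n := by
                exact_mod_cast le_trans (le_max_left N 1) hn
              nlinarith [h2, h3, hpos']
          _ = ENNReal.ofReal (c₁ * Q' * θ^(1+r)) * (n : ℝ≥0∞) := by
              rw [ENNReal.ofReal_mul (by positivity), ENNReal.ofReal_natCast]
      calc distortionE μ (q n) r / (n : ℝ≥0∞) ≤ M / (n : ℝ≥0∞) :=
            ENNReal.div_le_div_right (hDM n hn1) _
        _ ≤ ENNReal.ofReal (c₁ * Q' * θ^(1+r)) := ENNReal.div_le_of_le_mul hMn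
    have h2 := le_trans hlow h1
    rw [ENNReal.ofReal_le_ofReal_iff (by positivity)] at h2
    have h3 : Metric.diam ((q n) ⁻¹' {a}) ^ (1+r) ≤ θ ^ (1+r) :=
      le_of_mul_le_mul_left (by nlinarith [h2]) (by positivity : (0:ℝ) < c₁ * Q')
    exact (Real.rpow_le_rpow_iff hda.le hθ.le h1r).1 h3
  -- the per-cell integral estimate
  have hFa : ∀ ε : ℝ, 0 < ε → ∃ δ : ℝ, 0 < δ ∧ ∀ n : ℕ, 0 < n →
      ∀ a ∈ Jcells q (Set.Icc u v) n, Metric.diam ((q n) ⁻¹' {a}) ≤ δ →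
      |(∫ x in (q n) ⁻¹' {a}, g x) -
        Metric.diam ((q n) ⁻¹' {a}) * g a| ≤ ε * Metric.diam ((q n) ⁻¹' {a}) := by
    intro ε hε
    obtain ⟨δ, hδ, hδ'⟩ := Metric.uniformContinuousOn_iff_le.1 hgu ε hε
    refine ⟨δ, hδ, fun n hn a ha hdle => ?_⟩
    obtain ⟨haK, hda, hvolC, habs, -, -⟩ := hcell n hn a ha
    obtain ⟨⟨hqm, -⟩, -, -, -, -⟩ := hq n hn
    have hCm : MeasurableSet ((q n) ⁻¹' {a}) := hqm (measurableSet_singleton _)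
    have hCsub : (q n) ⁻¹' {a} ⊆ Set.Icc u v := ha.2
    have hvollt : volume ((q n) ⁻¹' {a}) < ⊤ := by
      rw [hvolC]; exact ENNReal.ofReal_lt_top
    have hgaeC : AEStronglyMeasurable g (volume.restrict ((q n) ⁻¹' {a})) :=
      (hgae.mono_measure (Measure.restrict_mono hCsub le_rfl)).aestronglyMeasurable
    have hgint : IntegrableOn g ((q n) ⁻¹' {a}) := by
      refine Integrable.mono'
        (integrableOn_const hvollt.ne : IntegrableOn (fun _ => c₂ ^ p) _ _)
        hgaeC ?_
      refine (ae_restrict_iff' hCm).2 (ae_of_all _ fun x hx => ?_)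
      rw [Real.norm_eq_abs, abs_of_nonneg (Real.rpow_nonneg (hh0 x) p)]
      exact Real.rpow_le_rpow (hh0 x) (hc2h x (hCsub hx)) hppos.le
    have hconst : IntegrableOn (fun _ => g a) ((q n) ⁻¹' {a}) :=
      integrableOn_const hvollt.ne
    have htoReal : (volume ((q n) ⁻¹' {a})).toReal = Metric.diam ((q n) ⁻¹' {a}) := by
      rw [hvolC, ENNReal.toReal_ofReal hda.le]
    have hsplit : ∫ x in (q n) ⁻¹' {a}, (g x - g a) =
        (∫ x in (q n) ⁻¹' {a}, g x) - Metric.diam ((q n) ⁻¹' {a}) * g a := by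
      rw [integral_sub hgint hconst, setIntegral_const, smul_eq_mul, measureReal_def, htoReal]
    calc |(∫ x in (q n) ⁻¹' {a}, g x) - Metric.diam ((q n) ⁻¹' {a}) * g a|
        = ‖∫ x in (q n) ⁻¹' {a}, (g x - g a)‖ := by
          rw [hsplit, Real.norm_eq_abs]
      _ ≤ ε * (volume ((q n) ⁻¹' {a})).toReal := by
          refine norm_setIntegral_le_of_norm_le_const hvollt fun x hx => ?_
          rw [Real.norm_eq_abs, ← Real.dist_eq]
          exact (hδ' x (hCsub hx) a haK (by
            rw [Real.dist_eq]
            exact le_trans (habs x hx) hdle))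
      _ = ε * Metric.diam ((q n) ⁻¹' {a}) := by rw [htoReal]
  -- the total length of the cells in J is at most v - u
  have hsum : ∀ n : ℕ, ∀ hn : 0 < n, ∀ b₀ ∈ Jcells q (Set.Icc u v) n,
      (∀ a ∈ Jcells q (Set.Icc u v) n,
        Metric.diam ((q n) ⁻¹' {b₀}) ≤ Metric.diam ((q n) ⁻¹' {a})) →
      ((Jcells q (Set.Icc u v) n).ncard : ℝ) * Metric.diam ((q n) ⁻¹' {b₀}) ≤ v - u := by
    intro n hn b₀ hb₀ hb₀min
    obtain ⟨⟨hqm, -⟩, -, -, -, -⟩ := hq n hn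
    set t := (hJfin n hn).toFinset with ht_def
    have hmemt : ∀ a, a ∈ t ↔ a ∈ Jcells q (Set.Icc u v) n := fun a =>
      (hJfin n hn).mem_toFinset
    have hdisj : (↑t : Set ℝ).PairwiseDisjoint (fun a => (q n) ⁻¹' {a}) := by
      intro a _ b _ hab
      exact Set.disjoint_left.2 fun x hxa hxb => hab (by rw [← hxa, ← hxb])
    have hsum1 : ∑ a ∈ t, volume ((q n) ⁻¹' {a}) ≤ ENNReal.ofReal (v - u) := by
      calc ∑ a ∈ t, volume ((q n) ⁻¹' {a})
          = volume (⋃ a ∈ t, (q n) ⁻¹' {a}) :=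
            (measure_biUnion_finset hdisj fun a _ => hqm (measurableSet_singleton _)).symm
        _ ≤ volume (Set.Icc u v) := by
            refine measure_mono (Set.iUnion₂_subset fun a ha => ?_)
            exact ((hmemt a).1 ha).2
        _ = ENNReal.ofReal (v - u) := Real.volume_Icc
    have hcount : ((Jcells q (Set.Icc u v) n).ncard : ℝ≥0∞) *
        ENNReal.ofReal (Metric.diam ((q n) ⁻¹' {b₀})) ≤ ENNReal.ofReal (v - u) := by
      have hcard : (Jcells q (Set.Icc u v) n).ncard = t.card :=
        Set.ncard_eq_toFinset_card _ (hJfin n hn)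
      calc ((Jcells q (Set.Icc u v) n).ncard : ℝ≥0∞) *
            ENNReal.ofReal (Metric.diam ((q n) ⁻¹' {b₀}))
          = ∑ _a ∈ t, ENNReal.ofReal (Metric.diam ((q n) ⁻¹' {b₀})) := by
            rw [Finset.sum_const, hcard, nsmul_eq_mul]
        _ ≤ ∑ a ∈ t, volume ((q n) ⁻¹' {a}) := by
            refine Finset.sum_le_sum fun a ha => ?_
            obtain ⟨-, -, hvolC, -, -, -⟩ := hcell n hn a ((hmemt a).1 ha)
            rw [hvolC]
            exact ENNReal.ofReal_le_ofReal (hb₀min a ((hmemt a).1 ha))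
        _ ≤ ENNReal.ofReal (v - u) := hsum1
    obtain ⟨-, hdb₀, -, -, -, -⟩ := hcell n hn b₀ hb₀
    have := hcount
    rw [← ENNReal.ofReal_natCast, ← ENNReal.ofReal_mul (by positivity)] at this
    rw [ENNReal.ofReal_le_ofReal_iff (by linarith)] at this
    exact this
  -- the main eventual bound
  have main : ∀ ε : ℝ, 0 < ε → ∀ᶠ n : ℕ in atTop,
      (0 ≤ ((Jcells q (Set.Icc u v) n).ncard : ℝ) * ε₃ n ∧
        ((Jcells q (Set.Icc u v) n).ncard : ℝ) * ε₃ n ≤ (R * (v - u)) * ε) ∧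
      (0 ≤ ε₃ n / sInf ((fun a : ℝ => Metric.diam ((q n) ⁻¹' {a})) ''
          Jcells q (Set.Icc u v) n) ∧
        ε₃ n / sInf ((fun a : ℝ => Metric.diam ((q n) ⁻¹' {a})) ''
          Jcells q (Set.Icc u v) n) ≤ R * ε) := by
    intro ε hε
    obtain ⟨δ, hδ, hδ'⟩ := hFa ε hε
    filter_upwards [hsmall δ hδ, eventually_ge_atTop m, eventually_ge_atTop 1]
      with n hnsmall hnm hn1
    have hn : 0 < n := hn1
    have hJne : (Jcells q (Set.Icc u v) n).Nonempty := hm n hnm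
    have hJf : (Jcells q (Set.Icc u v) n).Finite := hJfin n hn
    -- minimal diameter cell
    obtain ⟨b₀, hb₀J, hb₀min⟩ :=
      Set.exists_min_image (Jcells q (Set.Icc u v) n)
        (fun a => Metric.diam ((q n) ⁻¹' {a})) hJf hJne
    obtain ⟨-, hdb₀, -, -, -, -⟩ := hcell n hn b₀ hb₀J
    -- each member of the sSup-set is bounded
    have hFbound : ∀ a ∈ Jcells q (Set.Icc u v) n,
        |(∫ x in (q n) ⁻¹' {a}, g x) - Metric.diam ((q n) ⁻¹' {a}) * g a| ≤
          ε * (R * Metric.diam ((q n) ⁻¹' {b₀})) := by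
      intro a haJ
      calc |(∫ x in (q n) ⁻¹' {a}, g x) - Metric.diam ((q n) ⁻¹' {a}) * g a|
          ≤ ε * Metric.diam ((q n) ⁻¹' {a}) :=
            hδ' n hn a haJ (hnsmall a haJ)
        _ ≤ ε * (R * Metric.diam ((q n) ⁻¹' {b₀})) := by
            have := hratio n hn a haJ b₀ hb₀J
            nlinarith [this, hε.le]
    -- identify the image set and ε₃
    have himg_ne : ((fun a : ℝ =>
        |(∫ x in (q n) ⁻¹' {a}, h x ^ (1 / (1 + r))) -
          Metric.diam ((q n) ⁻¹' {a}) * h a ^ (1 / (1 + r))|) ''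
        Jcells q (Set.Icc u v) n).Nonempty := hJne.image _
    have himg_bdd : BddAbove ((fun a : ℝ =>
        |(∫ x in (q n) ⁻¹' {a}, h x ^ (1 / (1 + r))) -
          Metric.diam ((q n) ⁻¹' {a}) * h a ^ (1 / (1 + r))|) ''
        Jcells q (Set.Icc u v) n) := (hJf.image _).bddAbove
    have hge : ∀ y ∈ ((fun a : ℝ =>
        |(∫ x in (q n) ⁻¹' {a}, h x ^ (1 / (1 + r))) -
          Metric.diam ((q n) ⁻¹' {a}) * h a ^ (1 / (1 + r))|) ''
        Jcells q (Set.Icc u v) n), y ≤ ε * (R * Metric.diam ((q n) ⁻¹' {b₀})) := by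
      rintro y ⟨a, haJ, rfl⟩
      exact hFbound a haJ
    have hε₃ub : ε₃ n ≤ ε * (R * Metric.diam ((q n) ⁻¹' {b₀})) := by
      rw [hε₃ n]
      exact csSup_le himg_ne hge
    have hε₃nonneg : 0 ≤ ε₃ n := by
      rw [hε₃ n]
      obtain ⟨a₀, ha₀⟩ := hJne
      exact le_trans (abs_nonneg _) (le_csSup himg_bdd (Set.mem_image_of_mem _ ha₀))
    -- identify the sInf with the minimal diameter
    have hinf : sInf ((fun a : ℝ => Metric.diam ((q n) ⁻¹' {a})) ''
        Jcells q (Set.Icc u v) n) = Metric.diam ((q n) ⁻¹' {b₀}) := by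
      refine le_antisymm (csInf_le (hJf.image _).bddBelow (Set.mem_image_of_mem _ hb₀J)) ?_
      refine le_csInf (hJne.image _) ?_
      rintro y ⟨a, haJ, rfl⟩
      exact hb₀min a haJ
    have hsum' := hsum n hn b₀ hb₀J hb₀min
    constructor
    · refine ⟨mul_nonneg (Nat.cast_nonneg _) hε₃nonneg, ?_⟩
      calc ((Jcells q (Set.Icc u v) n).ncard : ℝ) * ε₃ n
          ≤ ((Jcells q (Set.Icc u v) n).ncard : ℝ) *
            (ε * (R * Metric.diam ((q n) ⁻¹' {b₀}))) := by
            exact mul_le_mul_of_nonneg_left hε₃ub (Nat.cast_nonneg _)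
        _ = (ε * R) * (((Jcells q (Set.Icc u v) n).ncard : ℝ) *
            Metric.diam ((q n) ⁻¹' {b₀})) := by ring
        _ ≤ (ε * R) * (v - u) := by
            refine mul_le_mul_of_nonneg_left hsum' ?_
            positivity
        _ = (R * (v - u)) * ε := by ring
    · rw [hinf]
      refine ⟨div_nonneg hε₃nonneg hdb₀.le, ?_⟩
      rw [div_le_iff₀ hdb₀]
      calc ε₃ n ≤ ε * (R * Metric.diam ((q n) ⁻¹' {b₀})) := hε₃ub
        _ = R * ε * Metric.diam ((q n) ⁻¹' {b₀}) := by ring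
  -- conclude
  constructor
  · have hvu : (0:ℝ) < v - u := by linarith
    refine tendstoZeroOfBounds (mul_pos hRpos hvu) ?_
    intro ε hε
    filter_upwards [main ε hε] with n hn
    exact hn.1
  · have htend : Tendsto (fun n : ℕ => ε₃ n /
        sInf ((fun a : ℝ => Metric.diam ((q n) ⁻¹' {a})) '' Jcells q (Set.Icc u v) n))
        atTop (nhds 0) := by
      refine tendstoZeroOfBounds hRpos ?_
      intro ε hε
      filter_upwards [main ε hε] with n hn
      refine ⟨hn.2.1, ?_⟩
      calc _ ≤ R * ε := hn.2.2
        _ = R * ε := rfl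
    exact htend.limsup_eq
end

section
/- Let μ be absolutely continuous with weakly unimodal density h, r > 1, and (q_n)_{n∈ℕ} the sequence of n-level Gersho quantizers of order r for μ. Let x₁(n) = sup q_n⁻¹(min q_n(ℝ)) (the right endpoint of the leftmost codecell of q_n) and x₂(n) = inf q_n⁻¹(max q_n(ℝ)) (the left endpoint of the rightmost codecell of q_n). Then x₁(n) → inf(supp μ) and x₂(n) → sup(supp μ) as n → ∞. -/
open MeasureTheory Set Filter Topology
open scoped ENNReal NNReal

/- ===== Auxiliary lemmas ===== -/

section Aux

open scoped ENNReal

lemma ordconn_lt {S T : Set ℝ} (hS : S.OrdConnected) (hT : T.OrdConnected)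
    (hd : Disjoint S T) {x y : ℝ} (hx : x ∈ S) (hy : y ∈ T) (hxy : x < y) :
    ∀ u ∈ S, ∀ v ∈ T, u < v := by
  intro u hu v hv
  by_contra hvu
  push_neg at hvu
  rcases le_or_gt y u with hyu | huy
  · exact Set.disjoint_left.1 hd (hS.out hx hu ⟨hxy.le, hyu⟩) hy
  · exact Set.disjoint_left.1 hd hu (hT.out hv hy ⟨hvu, huy.le⟩)

lemma msupp_compl_null (μ : Measure ℝ) : μ (msupp μ)ᶜ = 0 := by
  have key : (msupp μ)ᶜ ⊆ ⋃ p : ℚ × ℚ,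
      (if μ (Set.Ioo (p.1 : ℝ) (p.2 : ℝ)) = 0 then Set.Ioo (p.1 : ℝ) (p.2 : ℝ) else ∅) := by
    intro x hx
    simp only [Set.mem_compl_iff, msupp, Set.mem_setOf_eq] at hx
    push_neg at hx
    obtain ⟨U, hU, hU0⟩ := hx
    have hU0 : μ U = 0 := le_antisymm hU0 zero_le
    obtain ⟨ε, hε, hball⟩ := Metric.mem_nhds_iff.1 hU
    obtain ⟨p, hp1, hp2⟩ := exists_rat_btwn (sub_lt_self x hε)
    obtain ⟨s, hs1, hs2⟩ := exists_rat_btwn (lt_add_of_pos_right x hε)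
    have hsub : Set.Ioo (p : ℝ) (s : ℝ) ⊆ U := by
      intro z hz
      apply hball
      rw [Real.ball_eq_Ioo]
      exact ⟨hp1.trans hz.1, hz.2.trans hs2⟩
    have h0 : μ (Set.Ioo (p : ℝ) (s : ℝ)) = 0 := measure_mono_null hsub hU0
    refine Set.mem_iUnion.2 ⟨(p, s), ?_⟩
    simp only
    rw [if_pos h0]
    exact ⟨hp2, hs1⟩
  refine measure_mono_null key (measure_iUnion_null fun p => ?_)
  split_ifs with hp
  · exact hp
  · simp

lemma msupp_nonempty (μ : Measure ℝ) [IsProbabilityMeasure μ] : (msupp μ).Nonempty := by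
  rw [Set.nonempty_iff_ne_empty]
  intro hne
  have h := msupp_compl_null μ
  rw [hne, Set.compl_empty, measure_univ] at h
  exact one_ne_zero h

lemma noAtoms_of_density (μ : Measure ℝ) (h : ℝ → ℝ)
    (hμ : μ = volume.withDensity (fun x => ENNReal.ofReal (h x))) : NullSingletonClass μ := by
  refine ⟨fun x => ?_⟩
  have hac : μ ≪ volume := by
    rw [hμ]; exact withDensity_absolutelyContinuous _ _
  exact hac Real.volume_singleton

lemma pos_Ioo_lt (μ : Measure ℝ) {u m : ℝ} (hpos : 0 < μ (Set.Ioo u m)) : u < m := by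
  by_contra hum
  rw [Set.Ioo_eq_empty hum] at hpos
  simp at hpos

lemma split_pos (μ : Measure ℝ) [NullSingletonClass μ] {u m : ℝ} (hpos : 0 < μ (Set.Ioo u m)) :
    ∃ t η : ℝ, 0 < η ∧ t ≤ m ∧ 0 < μ (Set.Ioo u t) ∧ 0 < μ (Set.Ioo (t + η) m) := by
  classical
  set A : Set ℝ := {t | t ≤ m ∧ μ (Set.Ioo u t) = 0} with hA
  have hum : u < m := pos_Ioo_lt μ hpos
  have huA : u ∈ A := ⟨hum.le, by simp⟩
  have hbdd : BddAbove A := ⟨m, fun t ht => ht.1⟩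
  set T := sSup A with hT
  have hTm : T ≤ m := csSup_le ⟨u, huA⟩ fun t ht => ht.1
  have h0 : μ (Set.Ioo u T) = 0 := by
    have hsub : Set.Ioo u T ⊆ ⋃ k : ℕ, Set.Ioo u (T - 1 / (k + 1)) := by
      intro x hx
      obtain ⟨k, hk⟩ := exists_nat_one_div_lt (sub_pos.2 hx.2)
      exact Set.mem_iUnion.2 ⟨k, hx.1, by linarith⟩
    refine measure_mono_null hsub (measure_iUnion_null fun k => ?_)
    rcases le_or_gt T (u + 1 / (k + 1)) with hk | hk
    · rw [Set.Ioo_eq_empty (by intro hcon; linarith)]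
      simp
    · obtain ⟨t, htA, htk⟩ := exists_lt_of_lt_csSup ⟨u, huA⟩
        (by have hp01 : (0:ℝ) < 1 / (k + 1) := by positivity
            linarith : T - 1 / (k + 1 : ℝ) < T)
      exact measure_mono_null (Set.Ioo_subset_Ioo_right htk.le) htA.2
  have h1 : 0 < μ (Set.Ioo T m) := by
    by_contra h1
    push_neg at h1
    have h1 : μ (Set.Ioo T m) = 0 := le_antisymm h1 zero_le
    have hsub : Set.Ioo u m ⊆ Set.Ioo u T ∪ ({T} ∪ Set.Ioo T m) := by
      intro x hx
      rcases lt_trichotomy x T with hxT | hxT | hxT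
      · exact Or.inl ⟨hx.1, hxT⟩
      · exact Or.inr (Or.inl (by simp [hxT]))
      · exact Or.inr (Or.inr ⟨hxT, hx.2⟩)
    exact absurd (measure_mono_null hsub
      (measure_union_null h0 (measure_union_null (measure_singleton T) h1))) hpos.ne'
  have h2 : ∃ k : ℕ, 0 < μ (Set.Ioo (T + 1 / (k + 1)) m) := by
    by_contra h2
    push_neg at h2
    have hsub : Set.Ioo T m ⊆ ⋃ k : ℕ, Set.Ioo (T + 1 / (k + 1)) m := by
      intro x hx
      obtain ⟨k, hk⟩ := exists_nat_one_div_lt (sub_pos.2 hx.1)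
      exact Set.mem_iUnion.2 ⟨k, by linarith, hx.2⟩
    exact absurd (measure_mono_null hsub (measure_iUnion_null fun k =>
      le_antisymm (h2 k) zero_le)) h1.ne'
  obtain ⟨k, hk⟩ := h2
  set η0 : ℝ := 1 / (k + 1) with hη0
  have hη0pos : 0 < η0 := by positivity
  have hTη0 : T + η0 < m := pos_Ioo_lt μ hk
  refine ⟨T + η0 / 3, η0 / 3, by positivity, by linarith, ?_, ?_⟩
  · by_contra hc
    push_neg at hc
    have hmem : T + η0 / 3 ∈ A := ⟨by linarith, le_antisymm hc zero_le⟩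
    have := le_csSup hbdd hmem
    simp only [← hT] at this
    linarith
  · exact lt_of_lt_of_le hk (measure_mono (Set.Ioo_subset_Ioo_left (by linarith)))

end Aux

/- ===== Gersho quantizer structure lemmas ===== -/

section Gersho

open scoped ENNReal

variable {μ : Measure ℝ} {r : ℝ} {n : ℕ} {q : ℝ → ℝ}

lemma gersho_range_finite (hG : IsGersho μ r n q) : (Set.range q).Finite := by
  rw [← Set.encard_ne_top_iff, hG.2.1]
  simp

lemma gersho_range_nonempty (hG : IsGersho μ r n q) (hn : 0 < n) : (Set.range q).Nonempty := by
  rw [← Set.encard_ne_zero, hG.2.1]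
  exact_mod_cast hn.ne'

lemma gersho_lintegral_partition (hG : IsGersho μ r n q) (f : ℝ → ℝ≥0∞) :
    ∫⁻ x, f x ∂μ = ∑ a ∈ (gersho_range_finite hG).toFinset, ∫⁻ x in q ⁻¹' {a}, f x ∂μ := by
  have hmeas : ∀ a : ℝ, MeasurableSet (q ⁻¹' {a}) := fun a => hG.1.1 (measurableSet_singleton a)
  rw [← lintegral_biUnion_finset (μ := μ) ?_ (fun b _ => hmeas b) f]
  · have huniv : ⋃ b ∈ (gersho_range_finite hG).toFinset, q ⁻¹' {b} = Set.univ := by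
      ext x
      simp only [Set.mem_iUnion, Set.mem_preimage, Set.mem_singleton_iff, Set.mem_univ, iff_true]
      exact ⟨q x, by simp [Set.Finite.mem_toFinset], rfl⟩
    rw [huniv, Measure.restrict_univ]
  · intro a _ b _ hab
    refine Set.disjoint_left.2 fun x hxa hxb => hab ?_
    simp only [Set.mem_preimage, Set.mem_singleton_iff] at hxa hxb
    rw [← hxa, ← hxb]

lemma gersho_distortion_sum (hG : IsGersho μ r n q) :
    distortionE μ q r = ∑ a ∈ (gersho_range_finite hG).toFinset, cellMoment μ r (q ⁻¹' {a}) a := by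
  rw [distortionE, gersho_lintegral_partition hG]
  refine Finset.sum_congr rfl fun a _ => ?_
  refine setLIntegral_congr_fun (hG.1.1 (measurableSet_singleton a))
    (fun x hx => ?_)
  simp only [Set.mem_preimage, Set.mem_singleton_iff] at hx
  rw [hx]

lemma gersho_distortion_le (hG : IsGersho μ r n q) :
    distortionE μ q r ≤ ∫⁻ x, ENNReal.ofReal (|x| ^ r) ∂μ := by
  rw [gersho_distortion_sum hG,
    gersho_lintegral_partition hG (fun x => ENNReal.ofReal (|x| ^ r))]
  refine Finset.sum_le_sum fun a ha => ?_
  have hmem : a ∈ Set.range q := (Set.Finite.mem_toFinset _).1 ha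
  have hb := hG.2.2.2.1 a hmem 0
  simpa [cellMoment, sub_zero] using hb

lemma gersho_distortion_pos [IsProbabilityMeasure μ] [NullSingletonClass μ]
    (hG : IsGersho μ r n q) : 0 < distortionE μ q r := by
  rw [pos_iff_ne_zero]
  intro h0
  have hmeas : Measurable fun x => ENNReal.ofReal (|x - q x| ^ r) := by
    have hq := hG.1.1; measurability
  rw [distortionE, lintegral_eq_zero_iff hmeas] at h0
  have h0' : ∀ᵐ x ∂μ, ENNReal.ofReal (|x - q x| ^ r) = 0 := h0
  have hnull : μ {x : ℝ | q x ≠ x} = 0 := by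
    refine measure_mono_null (fun x hx => ?_) (ae_iff.1 h0')
    simp only [Set.mem_setOf_eq] at hx ⊢
    intro hzero
    have habs : 0 < |x - q x| := abs_pos.2 (sub_ne_zero.2 fun he => hx he.symm)
    exact (ENNReal.ofReal_pos.2 (Real.rpow_pos_of_pos habs r)).ne' hzero
  have hrange : μ {x : ℝ | q x = x} = 0 := by
    refine measure_mono_null (fun x hx => ?_) ((gersho_range_finite hG).countable.measure_zero μ)
    exact ⟨x, hx⟩
  have hle : (1 : ℝ≥0∞) ≤ μ {x : ℝ | q x = x} + μ {x : ℝ | q x ≠ x} := by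
    calc (1 : ℝ≥0∞) = μ Set.univ := measure_univ.symm
      _ = μ ({x : ℝ | q x = x} ∪ {x : ℝ | q x ≠ x}) := by
          congr 1
          ext x; simp [em]
      _ ≤ μ {x : ℝ | q x = x} + μ {x : ℝ | q x ≠ x} := measure_union_le _ _
  rw [hnull, hrange] at hle
  simp at hle

lemma gersho_cellMoment_eq (hG : IsGersho μ r n q) {a : ℝ} (ha : a ∈ Set.range q) :
    cellMoment μ r (q ⁻¹' {a}) a = distortionE μ q r / n := hG.2.2.2.2 a ha

lemma gersho_cellMoment_pos [IsProbabilityMeasure μ] [NullSingletonClass μ]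
    (hG : IsGersho μ r n q) {a : ℝ} (ha : a ∈ Set.range q) :
    0 < cellMoment μ r (q ⁻¹' {a}) a := by
  rw [gersho_cellMoment_eq hG ha]
  exact ENNReal.div_pos (gersho_distortion_pos hG).ne' (by simp)

lemma gersho_cellMoment_lt_top (hG : IsGersho μ r n q) (hn : 0 < n)
    (hM : ∫⁻ x, ENNReal.ofReal (|x| ^ r) ∂μ ≠ ⊤) {a : ℝ} (ha : a ∈ Set.range q) :
    cellMoment μ r (q ⁻¹' {a}) a < ⊤ := by
  rw [gersho_cellMoment_eq hG ha]
  refine ENNReal.div_lt_top ?_ (by exact_mod_cast hn.ne')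
  exact (lt_of_le_of_lt (gersho_distortion_le hG) (lt_top_iff_ne_top.2 hM)).ne

lemma gersho_cell_pos [IsProbabilityMeasure μ] [NullSingletonClass μ]
    (hG : IsGersho μ r n q) {a : ℝ} (ha : a ∈ Set.range q) :
    0 < μ (q ⁻¹' {a}) := by
  by_contra hc
  push_neg at hc
  have h0 : μ (q ⁻¹' {a}) = 0 := le_antisymm hc zero_le
  have hpos := gersho_cellMoment_pos hG ha
  rw [cellMoment, Measure.restrict_eq_zero.2 h0, lintegral_zero_measure] at hpos
  exact lt_irrefl _ hpos

lemma gersho_codepoint_le_csSup [IsProbabilityMeasure μ] [NullSingletonClass μ]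
    (hG : IsGersho μ r n q) (hn : 0 < n) (hr1 : 1 ≤ r)
    (hM : ∫⁻ x, ENNReal.ofReal (|x| ^ r) ∂μ ≠ ⊤)
    {a : ℝ} (ha : a ∈ Set.range q) (hbdd : BddAbove (q ⁻¹' {a})) :
    a ≤ sSup (q ⁻¹' {a}) := by
  by_contra hc
  push_neg at hc
  set S := q ⁻¹' {a} with hS
  set s := sSup S with hs
  have hd : 0 < a - s := sub_pos.2 hc
  have hr0 : (0 : ℝ) ≤ r := by linarith
  have hpt : ∀ x ∈ S, ENNReal.ofReal (|x - s| ^ r) + ENNReal.ofReal ((a - s) ^ r)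
      ≤ ENNReal.ofReal (|x - a| ^ r) := by
    intro x hx
    have hxs : x ≤ s := le_csSup hbdd hx
    have h1 : |x - s| = s - x := by rw [abs_sub_comm, abs_of_nonneg (sub_nonneg.2 hxs)]
    have h2 : |x - a| = (s - x) + (a - s) := by
      rw [abs_sub_comm, abs_of_nonneg (by linarith)]; ring
    rw [h1, h2]
    have h3 : (0 : ℝ) ≤ s - x := by linarith
    rw [← ENNReal.ofReal_rpow_of_nonneg h3 hr0, ← ENNReal.ofReal_rpow_of_nonneg hd.le hr0,
      ← ENNReal.ofReal_rpow_of_nonneg (by linarith) hr0, ENNReal.ofReal_add h3 hd.le]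
    exact ENNReal.add_rpow_le_rpow_add _ _ hr1
  have hmeasS : MeasurableSet S := hG.1.1 (measurableSet_singleton a)
  have hint : cellMoment μ r S s + ENNReal.ofReal ((a - s) ^ r) * μ S ≤ cellMoment μ r S a := by
    calc cellMoment μ r S s + ENNReal.ofReal ((a - s) ^ r) * μ S
        = ∫⁻ x in S, (ENNReal.ofReal (|x - s| ^ r) + ENNReal.ofReal ((a - s) ^ r)) ∂μ := by
          rw [lintegral_add_right _ measurable_const, setLIntegral_const]
          rfl
      _ ≤ ∫⁻ x in S, ENNReal.ofReal (|x - a| ^ r) ∂μ :=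
          lintegral_mono_ae (ae_restrict_of_forall_mem hmeasS hpt)
      _ = cellMoment μ r S a := rfl
  have hG4 : cellMoment μ r S a ≤ cellMoment μ r S s := hG.2.2.2.1 a ha s
  have hfin : cellMoment μ r S s ≠ ⊤ :=
    ne_top_of_le_ne_top (gersho_cellMoment_lt_top hG hn hM ha).ne
      ((self_le_add_right _ _).trans hint)
  have hcpos : ENNReal.ofReal ((a - s) ^ r) * μ S ≠ 0 :=
    (ENNReal.mul_pos (ENNReal.ofReal_pos.2 (Real.rpow_pos_of_pos hd r)).ne'
      (gersho_cell_pos hG ha).ne').ne'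
  exact lt_irrefl _ (lt_of_lt_of_le (ENNReal.lt_add_right hfin hcpos) (hint.trans hG4))

lemma gersho_csInf_le_codepoint [IsProbabilityMeasure μ] [NullSingletonClass μ]
    (hG : IsGersho μ r n q) (hn : 0 < n) (hr1 : 1 ≤ r)
    (hM : ∫⁻ x, ENNReal.ofReal (|x| ^ r) ∂μ ≠ ⊤)
    {a : ℝ} (ha : a ∈ Set.range q) (hbdd : BddBelow (q ⁻¹' {a})) :
    sInf (q ⁻¹' {a}) ≤ a := by
  by_contra hc
  push_neg at hc
  set S := q ⁻¹' {a} with hS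
  set s := sInf S with hs
  have hd : 0 < s - a := sub_pos.2 hc
  have hr0 : (0 : ℝ) ≤ r := by linarith
  have hpt : ∀ x ∈ S, ENNReal.ofReal (|x - s| ^ r) + ENNReal.ofReal ((s - a) ^ r)
      ≤ ENNReal.ofReal (|x - a| ^ r) := by
    intro x hx
    have hxs : s ≤ x := csInf_le hbdd hx
    have h1 : |x - s| = x - s := abs_of_nonneg (sub_nonneg.2 hxs)
    have h2 : |x - a| = (x - s) + (s - a) := by
      rw [abs_of_nonneg (by linarith)]; ring
    rw [h1, h2]
    have h3 : (0 : ℝ) ≤ x - s := by linarith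
    rw [← ENNReal.ofReal_rpow_of_nonneg h3 hr0, ← ENNReal.ofReal_rpow_of_nonneg hd.le hr0,
      ← ENNReal.ofReal_rpow_of_nonneg (by linarith) hr0, ENNReal.ofReal_add h3 hd.le]
    exact ENNReal.add_rpow_le_rpow_add _ _ hr1
  have hmeasS : MeasurableSet S := hG.1.1 (measurableSet_singleton a)
  have hint : cellMoment μ r S s + ENNReal.ofReal ((s - a) ^ r) * μ S ≤ cellMoment μ r S a := by
    calc cellMoment μ r S s + ENNReal.ofReal ((s - a) ^ r) * μ S
        = ∫⁻ x in S, (ENNReal.ofReal (|x - s| ^ r) + ENNReal.ofReal ((s - a) ^ r)) ∂μ := by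
          rw [lintegral_add_right _ measurable_const, setLIntegral_const]
          rfl
      _ ≤ ∫⁻ x in S, ENNReal.ofReal (|x - a| ^ r) ∂μ :=
          lintegral_mono_ae (ae_restrict_of_forall_mem hmeasS hpt)
      _ = cellMoment μ r S a := rfl
  have hG4 : cellMoment μ r S a ≤ cellMoment μ r S s := hG.2.2.2.1 a ha s
  have hfin : cellMoment μ r S s ≠ ⊤ :=
    ne_top_of_le_ne_top (gersho_cellMoment_lt_top hG hn hM ha).ne
      ((self_le_add_right _ _).trans hint)
  have hcpos : ENNReal.ofReal ((s - a) ^ r) * μ S ≠ 0 :=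
    (ENNReal.mul_pos (ENNReal.ofReal_pos.2 (Real.rpow_pos_of_pos hd r)).ne'
      (gersho_cell_pos hG ha).ne').ne'
  exact lt_irrefl _ (lt_of_lt_of_le (ENNReal.lt_add_right hfin hcpos) (hint.trans hG4))

lemma gersho_leftmost [IsProbabilityMeasure μ] [NullSingletonClass μ]
    (hG : IsGersho μ r n q) (hn : 0 < n) (hr1 : 1 ≤ r)
    (hM : ∫⁻ x, ENNReal.ofReal (|x| ^ r) ∂μ ≠ ⊤)
    {b : ℝ} (hb : b ∈ Set.range q) (hba : b ≠ sInf (Set.range q)) :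
    ∀ x ∈ q ⁻¹' {sInf (Set.range q)}, ∀ y ∈ q ⁻¹' {b}, x < y := by
  set a0 := sInf (Set.range q) with ha0def
  have hfin := gersho_range_finite hG
  have hne := gersho_range_nonempty hG hn
  have ha0 : a0 ∈ Set.range q := hne.csInf_mem hfin
  have ha0le : a0 ≤ b := csInf_le hfin.bddBelow hb
  have hdisj : Disjoint (q ⁻¹' {a0}) (q ⁻¹' {b}) := by
    refine Set.disjoint_left.2 fun x hx1 hx2 => hba ?_
    simp only [Set.mem_preimage, Set.mem_singleton_iff] at hx1 hx2
    rw [← hx2, hx1]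
  obtain ⟨x0, hx0⟩ := ha0
  obtain ⟨y0, hy0⟩ := hb
  have hx0m : x0 ∈ q ⁻¹' {a0} := by simp [hx0]
  have hy0m : y0 ∈ q ⁻¹' {b} := by simp [hy0]
  have hOC1 := hG.2.2.1 a0 ⟨x0, hx0⟩
  have hOC2 := hG.2.2.1 b ⟨y0, hy0⟩
  rcases lt_trichotomy x0 y0 with hlt | heq | hgt
  · exact fun x hx y hy => ordconn_lt hOC1 hOC2 hdisj hx0m hy0m hlt x hx y hy
  · exact absurd hy0m (fun hmem => Set.disjoint_left.1 hdisj (heq ▸ hx0m) hmem)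
  · exfalso
    have hall := ordconn_lt hOC2 hOC1 hdisj.symm hy0m hx0m hgt
    have hbddb : BddAbove (q ⁻¹' {b}) := ⟨x0, fun u hu => (hall u hu x0 hx0m).le⟩
    have hbdda : BddBelow (q ⁻¹' {a0}) := ⟨y0, fun v hv => (hall y0 hy0m v hv).le⟩
    have h1 : b ≤ sSup (q ⁻¹' {b}) :=
      gersho_codepoint_le_csSup hG hn hr1 hM ⟨y0, hy0⟩ hbddb
    have h2 : sInf (q ⁻¹' {a0}) ≤ a0 :=
      gersho_csInf_le_codepoint hG hn hr1 hM ⟨x0, hx0⟩ hbdda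
    have h3 : sSup (q ⁻¹' {b}) ≤ sInf (q ⁻¹' {a0}) :=
      csSup_le ⟨y0, hy0m⟩ fun u hu => le_csInf ⟨x0, hx0m⟩ fun v hv => (hall u hu v hv).le
    exact hba (le_antisymm (h1.trans (h3.trans h2)) ha0le)

lemma gersho_rightmost [IsProbabilityMeasure μ] [NullSingletonClass μ]
    (hG : IsGersho μ r n q) (hn : 0 < n) (hr1 : 1 ≤ r)
    (hM : ∫⁻ x, ENNReal.ofReal (|x| ^ r) ∂μ ≠ ⊤)
    {b : ℝ} (hb : b ∈ Set.range q) (hba : b ≠ sSup (Set.range q)) :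
    ∀ x ∈ q ⁻¹' {sSup (Set.range q)}, ∀ y ∈ q ⁻¹' {b}, y < x := by
  set a0 := sSup (Set.range q) with ha0def
  have hfin := gersho_range_finite hG
  have hne := gersho_range_nonempty hG hn
  have ha0 : a0 ∈ Set.range q := hne.csSup_mem hfin
  have ha0le : b ≤ a0 := le_csSup hfin.bddAbove hb
  have hdisj : Disjoint (q ⁻¹' {a0}) (q ⁻¹' {b}) := by
    refine Set.disjoint_left.2 fun x hx1 hx2 => hba ?_
    simp only [Set.mem_preimage, Set.mem_singleton_iff] at hx1 hx2
    rw [← hx2, hx1]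
  obtain ⟨x0, hx0⟩ := ha0
  obtain ⟨y0, hy0⟩ := hb
  have hx0m : x0 ∈ q ⁻¹' {a0} := by simp [hx0]
  have hy0m : y0 ∈ q ⁻¹' {b} := by simp [hy0]
  have hOC1 := hG.2.2.1 a0 ⟨x0, hx0⟩
  have hOC2 := hG.2.2.1 b ⟨y0, hy0⟩
  rcases lt_trichotomy y0 x0 with hlt | heq | hgt
  · exact fun x hx y hy => ordconn_lt hOC2 hOC1 hdisj.symm hy0m hx0m hlt y hy x hx
  · exact absurd hx0m (fun hmem => Set.disjoint_left.1 hdisj hmem (heq ▸ hy0m))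
  · exfalso
    have hall := ordconn_lt hOC1 hOC2 hdisj hx0m hy0m hgt
    -- hall : ∀ u ∈ cell a0, ∀ v ∈ cell b, u < v
    have hbddb : BddBelow (q ⁻¹' {b}) := ⟨x0, fun u hu => (hall x0 hx0m u hu).le⟩
    have hbdda : BddAbove (q ⁻¹' {a0}) := ⟨y0, fun v hv => (hall v hv y0 hy0m).le⟩
    have h1 : sInf (q ⁻¹' {b}) ≤ b :=
      gersho_csInf_le_codepoint hG hn hr1 hM ⟨y0, hy0⟩ hbddb
    have h2 : a0 ≤ sSup (q ⁻¹' {a0}) :=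
      gersho_codepoint_le_csSup hG hn hr1 hM ⟨x0, hx0⟩ hbdda
    have h3 : sSup (q ⁻¹' {a0}) ≤ sInf (q ⁻¹' {b}) :=
      csSup_le ⟨x0, hx0m⟩ fun u hu => le_csInf ⟨y0, hy0m⟩ fun v hv => (hall u hu v hv).le
    exact hba (le_antisymm ha0le (h2.trans (h3.trans h1)))

lemma gersho_left_cell [IsProbabilityMeasure μ] [NullSingletonClass μ]
    (hG : IsGersho μ r n q) (hn : 2 ≤ n) (hr1 : 1 ≤ r)
    (hM : ∫⁻ x, ENNReal.ofReal (|x| ^ r) ∂μ ≠ ⊤) :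
    (q ⁻¹' {sInf (Set.range q)}).Nonempty ∧ BddAbove (q ⁻¹' {sInf (Set.range q)}) ∧
    (∀ x y : ℝ, x ≤ y → y ∈ q ⁻¹' {sInf (Set.range q)} → x ∈ q ⁻¹' {sInf (Set.range q)}) ∧
    0 < μ (q ⁻¹' {sInf (Set.range q)}) := by
  have hn0 : 0 < n := by omega
  have hfin := gersho_range_finite hG
  have hne := gersho_range_nonempty hG hn0
  have ha0 : sInf (Set.range q) ∈ Set.range q := hne.csInf_mem hfin
  have hdc : ∀ x y : ℝ, x ≤ y → y ∈ q ⁻¹' {sInf (Set.range q)} →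
      x ∈ q ⁻¹' {sInf (Set.range q)} := by
    intro x y hxy hy
    by_contra hx
    have hqxne : q x ≠ sInf (Set.range q) := by
      intro he
      exact hx (by simp [he])
    have := gersho_leftmost hG hn0 hr1 hM ⟨x, rfl⟩ hqxne y hy x (by simp)
    exact absurd hxy (not_le.2 this)
  refine ⟨?_, ?_, hdc, gersho_cell_pos hG ha0⟩
  · obtain ⟨x, hx⟩ := ha0
    exact ⟨x, by simp [hx]⟩
  · have h1lt : 1 < (Set.range q).encard := by
      rw [hG.2.1]; exact_mod_cast (by omega : 1 < n)
    obtain ⟨b, hbmem, hbne⟩ := Set.exists_ne_of_one_lt_encard h1lt (sInf (Set.range q))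
    obtain ⟨y0, hy0⟩ := hbmem
    exact ⟨y0, fun x hx =>
      (gersho_leftmost hG hn0 hr1 hM ⟨y0, hy0⟩ hbne x hx y0 (by simp [hy0])).le⟩

lemma gersho_right_cell [IsProbabilityMeasure μ] [NullSingletonClass μ]
    (hG : IsGersho μ r n q) (hn : 2 ≤ n) (hr1 : 1 ≤ r)
    (hM : ∫⁻ x, ENNReal.ofReal (|x| ^ r) ∂μ ≠ ⊤) :
    (q ⁻¹' {sSup (Set.range q)}).Nonempty ∧ BddBelow (q ⁻¹' {sSup (Set.range q)}) ∧
    (∀ x y : ℝ, y ≤ x → y ∈ q ⁻¹' {sSup (Set.range q)} → x ∈ q ⁻¹' {sSup (Set.range q)}) ∧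
    0 < μ (q ⁻¹' {sSup (Set.range q)}) := by
  have hn0 : 0 < n := by omega
  have hfin := gersho_range_finite hG
  have hne := gersho_range_nonempty hG hn0
  have ha0 : sSup (Set.range q) ∈ Set.range q := hne.csSup_mem hfin
  have hdc : ∀ x y : ℝ, y ≤ x → y ∈ q ⁻¹' {sSup (Set.range q)} →
      x ∈ q ⁻¹' {sSup (Set.range q)} := by
    intro x y hxy hy
    by_contra hx
    have hqxne : q x ≠ sSup (Set.range q) := by
      intro he
      exact hx (by simp [he])
    have := gersho_rightmost hG hn0 hr1 hM ⟨x, rfl⟩ hqxne y hy x (by simp)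
    exact absurd hxy (not_le.2 this)
  refine ⟨?_, ?_, hdc, gersho_cell_pos hG ha0⟩
  · obtain ⟨x, hx⟩ := ha0
    exact ⟨x, by simp [hx]⟩
  · have h1lt : 1 < (Set.range q).encard := by
      rw [hG.2.1]; exact_mod_cast (by omega : 1 < n)
    obtain ⟨b, hbmem, hbne⟩ := Set.exists_ne_of_one_lt_encard h1lt (sSup (Set.range q))
    obtain ⟨y0, hy0⟩ := hbmem
    exact ⟨y0, fun x hx =>
      (gersho_rightmost hG hn0 hr1 hM ⟨y0, hy0⟩ hbne x hx y0 (by simp [hy0])).le⟩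

end Gersho

/- ===== Main convergence lemmas ===== -/

section Main

open scoped ENNReal

lemma tendsto_left_endpoint (μ : Measure ℝ) [IsProbabilityMeasure μ] [NullSingletonClass μ]
    (r : ℝ) (hr : 1 < r) (hM : ∫⁻ x, ENNReal.ofReal (|x| ^ r) ∂μ ≠ ⊤)
    (q : ℕ → ℝ → ℝ) (hq : ∀ n : ℕ, 0 < n → IsGersho μ r n (q n)) :
    Tendsto (fun n : ℕ => ((sSup ((q n) ⁻¹' {sInf (Set.range (q n))}) : ℝ) : EReal))
      atTop (nhds (sInf ((fun t : ℝ => (t : EReal)) '' msupp μ))) := by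
  set α := sInf ((fun t : ℝ => (t : EReal)) '' msupp μ) with hα
  have hr1 : 1 ≤ r := hr.le
  have hkey : ∀ n : ℕ, 2 ≤ n → ∃ y : ℝ, y ∈ msupp μ ∧
      (y : EReal) ≤ ((sSup ((q n) ⁻¹' {sInf (Set.range (q n))}) : ℝ) : EReal) := by
    intro n hn
    obtain ⟨hne, hbdd, hdc, hpos⟩ := gersho_left_cell (hq n (by omega)) hn hr1 hM
    have hint : ((q n) ⁻¹' {sInf (Set.range (q n))} ∩ msupp μ).Nonempty := by
      rw [Set.nonempty_iff_ne_empty]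
      intro he
      have hsub : (q n) ⁻¹' {sInf (Set.range (q n))} ⊆ (msupp μ)ᶜ := by
        intro x hx hxs
        exact Set.eq_empty_iff_forall_notMem.1 he x ⟨hx, hxs⟩
      exact hpos.ne' (measure_mono_null hsub (msupp_compl_null μ))
    obtain ⟨y, hyC, hyS⟩ := hint
    exact ⟨y, hyS, EReal.coe_le_coe_iff.2 (le_csSup hbdd hyC)⟩
  refine tendsto_order.2 ⟨?_, ?_⟩
  · intro b hb
    filter_upwards [eventually_ge_atTop 2] with n hn
    obtain ⟨y, hyS, hyle⟩ := hkey n hn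
    have hαy : α ≤ (y : EReal) := sInf_le ⟨y, hyS, rfl⟩
    exact lt_of_lt_of_le hb (hαy.trans hyle)
  · intro b hb
    obtain ⟨c', hc1, hc2⟩ := exists_between hb
    have hc'top : c' ≠ ⊤ := (lt_of_lt_of_le hc2 le_top).ne
    have hc'bot : c' ≠ ⊥ := fun he => absurd (he ▸ hc1) (not_lt_bot)
    lift c' to ℝ using ⟨hc'top, hc'bot⟩ with c
    obtain ⟨y, hyS, hyc⟩ : ∃ y ∈ msupp μ, y < c := by
      by_contra hcon
      push_neg at hcon
      have hle : (c : EReal) ≤ α := by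
        refine le_sInf ?_
        rintro z ⟨t, ht, rfl⟩
        exact EReal.coe_le_coe_iff.2 (hcon t ht)
      exact absurd hc1 (not_lt.2 hle)
    set m : ℝ := (y + c) / 2 with hm
    have hym : y < m := by simp only [hm]; linarith
    have hmc : m < c := by simp only [hm]; linarith
    have hpos : 0 < μ (Set.Ioo (y - 1) m) :=
      hyS _ (isOpen_Ioo.mem_nhds ⟨by linarith, hym⟩)
    obtain ⟨t, η, hη, htm, hp1, hp2⟩ := split_pos μ hpos
    set δ := ENNReal.ofReal ((η / 2) ^ r) *
      min (μ (Set.Ioo (y - 1) t)) (μ (Set.Ioo (t + η) m)) with hδ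
    have hδpos : 0 < δ :=
      ENNReal.mul_pos (ENNReal.ofReal_pos.2 (Real.rpow_pos_of_pos (by linarith) r)).ne'
        (lt_min hp1 hp2).ne'
    have htend : Tendsto
        (fun n : ℕ => (∫⁻ x, ENNReal.ofReal (|x| ^ r) ∂μ) * ((n : ℝ≥0∞))⁻¹) atTop (nhds 0) := by
      have h0 := ENNReal.Tendsto.const_mul (a := ∫⁻ x, ENNReal.ofReal (|x| ^ r) ∂μ)
        ENNReal.tendsto_inv_nat_nhds_zero (Or.inr hM)
      simpa using h0
    filter_upwards [eventually_ge_atTop 2, htend.eventually_lt_const hδpos] with n hn hlt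
    have hG := hq n (by omega : 0 < n)
    obtain ⟨hCne, hbdd, hdc, hCpos⟩ := gersho_left_cell hG hn hr1 hM
    have ha0mem : sInf (Set.range (q n)) ∈ Set.range (q n) :=
      (gersho_range_nonempty hG (by omega)).csInf_mem (gersho_range_finite hG)
    have hsup : sSup ((q n) ⁻¹' {sInf (Set.range (q n))}) ≤ c := by
      by_contra hsupc
      push_neg at hsupc
      have hsubC : ∀ x : ℝ, x < c → x ∈ (q n) ⁻¹' {sInf (Set.range (q n))} := by
        intro x hx
        obtain ⟨z, hz, hcz⟩ := exists_lt_of_lt_csSup hCne hsupc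
        exact hdc x z (by linarith) hz
      have hK1 : Set.Ioo (y - 1) t ⊆ (q n) ⁻¹' {sInf (Set.range (q n))} :=
        fun x hx => hsubC x (by have := hx.2; linarith)
      have hK2 : Set.Ioo (t + η) m ⊆ (q n) ⁻¹' {sInf (Set.range (q n))} :=
        fun x hx => hsubC x (lt_trans hx.2 hmc)
      have hlow : δ ≤ cellMoment μ r ((q n) ⁻¹' {sInf (Set.range (q n))})
          (sInf (Set.range (q n))) := by
        set a0 := sInf (Set.range (q n)) with ha0
        rcases le_or_gt a0 (t + η / 2) with hcase | hcase
        · have hptw : ∀ x ∈ Set.Ioo (t + η) m,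
              ENNReal.ofReal ((η / 2) ^ r) ≤ ENNReal.ofReal (|x - a0| ^ r) := by
            intro x hx
            have hxa : η / 2 ≤ |x - a0| := by
              have h1 : η / 2 ≤ x - a0 := by have := hx.1; linarith
              exact h1.trans (le_abs_self _)
            exact ENNReal.ofReal_le_ofReal
              (Real.rpow_le_rpow (by linarith) hxa (by linarith))
          calc δ ≤ ENNReal.ofReal ((η / 2) ^ r) * μ (Set.Ioo (t + η) m) :=
                mul_le_mul_right (min_le_right _ _) _
            _ = ∫⁻ _x in Set.Ioo (t + η) m, ENNReal.ofReal ((η / 2) ^ r) ∂μ :=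
                (setLIntegral_const _ _).symm
            _ ≤ ∫⁻ x in Set.Ioo (t + η) m, ENNReal.ofReal (|x - a0| ^ r) ∂μ :=
                lintegral_mono_ae (ae_restrict_of_forall_mem measurableSet_Ioo hptw)
            _ ≤ cellMoment μ r ((q n) ⁻¹' {a0}) a0 := lintegral_mono_set hK2
        · have hptw : ∀ x ∈ Set.Ioo (y - 1) t,
              ENNReal.ofReal ((η / 2) ^ r) ≤ ENNReal.ofReal (|x - a0| ^ r) := by
            intro x hx
            have hxa : η / 2 ≤ |x - a0| := by
              have h1 : η / 2 ≤ a0 - x := by have := hx.2; linarith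
              exact h1.trans ((le_abs_self _).trans (abs_sub_comm a0 x).le)
            exact ENNReal.ofReal_le_ofReal
              (Real.rpow_le_rpow (by linarith) hxa (by linarith))
          calc δ ≤ ENNReal.ofReal ((η / 2) ^ r) * μ (Set.Ioo (y - 1) t) :=
                mul_le_mul_right (min_le_left _ _) _
            _ = ∫⁻ _x in Set.Ioo (y - 1) t, ENNReal.ofReal ((η / 2) ^ r) ∂μ :=
                (setLIntegral_const _ _).symm
            _ ≤ ∫⁻ x in Set.Ioo (y - 1) t, ENNReal.ofReal (|x - a0| ^ r) ∂μ :=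
                lintegral_mono_ae (ae_restrict_of_forall_mem measurableSet_Ioo hptw)
            _ ≤ cellMoment μ r ((q n) ⁻¹' {a0}) a0 := lintegral_mono_set hK1
      have hup : cellMoment μ r ((q n) ⁻¹' {sInf (Set.range (q n))}) (sInf (Set.range (q n)))
          ≤ (∫⁻ x, ENNReal.ofReal (|x| ^ r) ∂μ) * ((n : ℝ≥0∞))⁻¹ := by
        rw [gersho_cellMoment_eq hG ha0mem, div_eq_mul_inv]
        exact mul_le_mul_left (gersho_distortion_le hG) _
      exact absurd (hlow.trans hup) (not_le.2 hlt)
    calc ((sSup ((q n) ⁻¹' {sInf (Set.range (q n))}) : ℝ) : EReal)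
        ≤ (c : EReal) := EReal.coe_le_coe_iff.2 hsup
      _ < b := hc2

lemma tendsto_right_endpoint (μ : Measure ℝ) [IsProbabilityMeasure μ] [NullSingletonClass μ]
    (r : ℝ) (hr : 1 < r) (hM : ∫⁻ x, ENNReal.ofReal (|x| ^ r) ∂μ ≠ ⊤)
    (q : ℕ → ℝ → ℝ) (hq : ∀ n : ℕ, 0 < n → IsGersho μ r n (q n)) :
    Tendsto (fun n : ℕ => ((sInf ((q n) ⁻¹' {sSup (Set.range (q n))}) : ℝ) : EReal))
      atTop (nhds (sSup ((fun t : ℝ => (t : EReal)) '' msupp μ))) := by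
  set β := sSup ((fun t : ℝ => (t : EReal)) '' msupp μ) with hβ
  have hr1 : 1 ≤ r := hr.le
  have hkey : ∀ n : ℕ, 2 ≤ n → ∃ y : ℝ, y ∈ msupp μ ∧
      ((sInf ((q n) ⁻¹' {sSup (Set.range (q n))}) : ℝ) : EReal) ≤ (y : EReal) := by
    intro n hn
    obtain ⟨hne, hbdd, hdc, hpos⟩ := gersho_right_cell (hq n (by omega)) hn hr1 hM
    have hint : ((q n) ⁻¹' {sSup (Set.range (q n))} ∩ msupp μ).Nonempty := by
      rw [Set.nonempty_iff_ne_empty]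
      intro he
      have hsub : (q n) ⁻¹' {sSup (Set.range (q n))} ⊆ (msupp μ)ᶜ := by
        intro x hx hxs
        exact Set.eq_empty_iff_forall_notMem.1 he x ⟨hx, hxs⟩
      exact hpos.ne' (measure_mono_null hsub (msupp_compl_null μ))
    obtain ⟨y, hyC, hyS⟩ := hint
    exact ⟨y, hyS, EReal.coe_le_coe_iff.2 (csInf_le hbdd hyC)⟩
  refine tendsto_order.2 ⟨?_, ?_⟩
  · intro b hb
    obtain ⟨c', hc1, hc2⟩ := exists_between hb
    have hc'top : c' ≠ ⊤ := (lt_of_lt_of_le hc2 le_top).ne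
    have hc'bot : c' ≠ ⊥ := fun he => absurd (he ▸ hc1) (not_lt_bot)
    lift c' to ℝ using ⟨hc'top, hc'bot⟩ with c
    obtain ⟨y, hyS, hyc⟩ : ∃ y ∈ msupp μ, c < y := by
      by_contra hcon
      push_neg at hcon
      have hle : β ≤ (c : EReal) := by
        refine sSup_le ?_
        rintro z ⟨t, ht, rfl⟩
        exact EReal.coe_le_coe_iff.2 (hcon t ht)
      exact absurd hc2 (not_lt.2 hle)
    set m : ℝ := (c + y) / 2 with hm
    have hym : m < y := by simp only [hm]; linarith
    have hmc : c < m := by simp only [hm]; linarith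
    have hpos : 0 < μ (Set.Ioo m (y + 1)) :=
      hyS _ (isOpen_Ioo.mem_nhds ⟨hym, by linarith⟩)
    obtain ⟨t, η, hη, htm, hp1, hp2⟩ := split_pos μ hpos
    have hmt : m < t := pos_Ioo_lt μ hp1
    set δ := ENNReal.ofReal ((η / 2) ^ r) *
      min (μ (Set.Ioo m t)) (μ (Set.Ioo (t + η) (y + 1))) with hδ
    have hδpos : 0 < δ :=
      ENNReal.mul_pos (ENNReal.ofReal_pos.2 (Real.rpow_pos_of_pos (by linarith) r)).ne'
        (lt_min hp1 hp2).ne'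
    have htend : Tendsto
        (fun n : ℕ => (∫⁻ x, ENNReal.ofReal (|x| ^ r) ∂μ) * ((n : ℝ≥0∞))⁻¹) atTop (nhds 0) := by
      have h0 := ENNReal.Tendsto.const_mul (a := ∫⁻ x, ENNReal.ofReal (|x| ^ r) ∂μ)
        ENNReal.tendsto_inv_nat_nhds_zero (Or.inr hM)
      simpa using h0
    filter_upwards [eventually_ge_atTop 2, htend.eventually_lt_const hδpos] with n hn hlt
    have hG := hq n (by omega : 0 < n)
    obtain ⟨hCne, hbdd, hdc, hCpos⟩ := gersho_right_cell hG hn hr1 hM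
    have ha0mem : sSup (Set.range (q n)) ∈ Set.range (q n) :=
      (gersho_range_nonempty hG (by omega)).csSup_mem (gersho_range_finite hG)
    have hinf : c ≤ sInf ((q n) ⁻¹' {sSup (Set.range (q n))}) := by
      by_contra hinfc
      push_neg at hinfc
      have hsubC : ∀ x : ℝ, c < x → x ∈ (q n) ⁻¹' {sSup (Set.range (q n))} := by
        intro x hx
        obtain ⟨z, hz, hcz⟩ := exists_lt_of_csInf_lt hCne hinfc
        exact hdc x z (by linarith) hz
      have hK1 : Set.Ioo m t ⊆ (q n) ⁻¹' {sSup (Set.range (q n))} :=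
        fun x hx => hsubC x (lt_trans hmc hx.1)
      have hK2 : Set.Ioo (t + η) (y + 1) ⊆ (q n) ⁻¹' {sSup (Set.range (q n))} :=
        fun x hx => hsubC x (by have := hx.1; linarith)
      have hlow : δ ≤ cellMoment μ r ((q n) ⁻¹' {sSup (Set.range (q n))})
          (sSup (Set.range (q n))) := by
        set a0 := sSup (Set.range (q n)) with ha0
        rcases le_or_gt a0 (t + η / 2) with hcase | hcase
        · have hptw : ∀ x ∈ Set.Ioo (t + η) (y + 1),
              ENNReal.ofReal ((η / 2) ^ r) ≤ ENNReal.ofReal (|x - a0| ^ r) := by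
            intro x hx
            have hxa : η / 2 ≤ |x - a0| := by
              have h1 : η / 2 ≤ x - a0 := by have := hx.1; linarith
              exact h1.trans (le_abs_self _)
            exact ENNReal.ofReal_le_ofReal
              (Real.rpow_le_rpow (by linarith) hxa (by linarith))
          calc δ ≤ ENNReal.ofReal ((η / 2) ^ r) * μ (Set.Ioo (t + η) (y + 1)) :=
                mul_le_mul_right (min_le_right _ _) _
            _ = ∫⁻ _x in Set.Ioo (t + η) (y + 1), ENNReal.ofReal ((η / 2) ^ r) ∂μ :=
                (setLIntegral_const _ _).symm
            _ ≤ ∫⁻ x in Set.Ioo (t + η) (y + 1), ENNReal.ofReal (|x - a0| ^ r) ∂μ :=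
                lintegral_mono_ae (ae_restrict_of_forall_mem measurableSet_Ioo hptw)
            _ ≤ cellMoment μ r ((q n) ⁻¹' {a0}) a0 := lintegral_mono_set hK2
        · have hptw : ∀ x ∈ Set.Ioo m t,
              ENNReal.ofReal ((η / 2) ^ r) ≤ ENNReal.ofReal (|x - a0| ^ r) := by
            intro x hx
            have hxa : η / 2 ≤ |x - a0| := by
              have h1 : η / 2 ≤ a0 - x := by have := hx.2; linarith
              exact h1.trans ((le_abs_self _).trans (abs_sub_comm a0 x).le)
            exact ENNReal.ofReal_le_ofReal
              (Real.rpow_le_rpow (by linarith) hxa (by linarith))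
          calc δ ≤ ENNReal.ofReal ((η / 2) ^ r) * μ (Set.Ioo m t) :=
                mul_le_mul_right (min_le_left _ _) _
            _ = ∫⁻ _x in Set.Ioo m t, ENNReal.ofReal ((η / 2) ^ r) ∂μ :=
                (setLIntegral_const _ _).symm
            _ ≤ ∫⁻ x in Set.Ioo m t, ENNReal.ofReal (|x - a0| ^ r) ∂μ :=
                lintegral_mono_ae (ae_restrict_of_forall_mem measurableSet_Ioo hptw)
            _ ≤ cellMoment μ r ((q n) ⁻¹' {a0}) a0 := lintegral_mono_set hK1
      have hup : cellMoment μ r ((q n) ⁻¹' {sSup (Set.range (q n))}) (sSup (Set.range (q n)))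
          ≤ (∫⁻ x, ENNReal.ofReal (|x| ^ r) ∂μ) * ((n : ℝ≥0∞))⁻¹ := by
        rw [gersho_cellMoment_eq hG ha0mem, div_eq_mul_inv]
        exact mul_le_mul_left (gersho_distortion_le hG) _
      exact absurd (hlow.trans hup) (not_le.2 hlt)
    calc b < (c : EReal) := hc1
      _ ≤ ((sInf ((q n) ⁻¹' {sSup (Set.range (q n))}) : ℝ) : EReal) :=
          EReal.coe_le_coe_iff.2 hinf
  · intro b hb
    filter_upwards [eventually_ge_atTop 2] with n hn
    obtain ⟨y, hyS, hyle⟩ := hkey n hn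
    have hβy : (y : EReal) ≤ β := le_sSup ⟨y, hyS, rfl⟩
    exact lt_of_le_of_lt (hyle.trans hβy) hb

end Main

theorem gersho_stmt_17 (μ : Measure ℝ) [IsProbabilityMeasure μ]
    (r : ℝ) (hr : 1 < r) (hmom : Integrable (fun x => |x| ^ r) μ)
    (h : ℝ → ℝ) (hh0 : ∀ x, 0 ≤ h x)
    (hμ : μ = volume.withDensity (fun x => ENNReal.ofReal (h x)))
    (hwu : WeaklyUnimodal h)
    (q : ℕ → ℝ → ℝ) (hq : ∀ n : ℕ, 0 < n → IsGersho μ r n (q n)) :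
    Tendsto
      (fun n : ℕ => ((sSup ((q n) ⁻¹' {sInf (Set.range (q n))}) : ℝ) : EReal))
      atTop (nhds (sInf ((fun t : ℝ => (t : EReal)) '' msupp μ))) ∧
    Tendsto
      (fun n : ℕ => ((sInf ((q n) ⁻¹' {sSup (Set.range (q n))}) : ℝ) : EReal))
      atTop (nhds (sSup ((fun t : ℝ => (t : EReal)) '' msupp μ))) := by
  haveI : NullSingletonClass μ := noAtoms_of_density μ h hμ
  have hM : ∫⁻ x, ENNReal.ofReal (|x| ^ r) ∂μ ≠ ⊤ := hmom.lintegral_lt_top.ne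
  exact ⟨tendsto_left_endpoint μ r hr hM q hq, tendsto_right_endpoint μ r hr hM q hq⟩
end
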